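/- arXiv:2003.07252 — 6 statements merged into one kernel-verified Lean document; each statement's English description precedes it below -/
import Mathlib

section
/- Let X, Y, Z be Banach spaces, 1 ≤ p < ∞, let U be a closed subspace of X ε Y, and let S : U → Z be an (ℓ^s_p,ℓ_p)-summing operator. Then there exist a constant K ≥ 0 and a measure μ ∈ P(B_{X*}) such that ‖S(T)‖_Z ≤ K (∫_{B_{X*}} ‖T(x*)‖_Y^p dμ(x*))^{1/p} for every T ∈ U. -/
open MeasureTheory Filter Topology

/-- The closed unit ball of the dual of `X`, equipped with the weak* topology. -/
abbrev DualBall (X : Type*) [NormedAddCommGroup X] [NormedSpace ℝ X] : Type _ :=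
  {φ : WeakDual ℝ X // ‖WeakDual.toStrongDual φ‖ ≤ 1}

noncomputable instance (X : Type*) [NormedAddCommGroup X] [NormedSpace ℝ X] :
    MeasurableSpace (DualBall X) := borel _

instance (X : Type*) [NormedAddCommGroup X] [NormedSpace ℝ X] :
    BorelSpace (DualBall X) := ⟨rfl⟩

variable {X Y Z : Type*} [NormedAddCommGroup X] [NormedSpace ℝ X]
  [NormedAddCommGroup Y] [NormedSpace ℝ Y] [NormedAddCommGroup Z] [NormedSpace ℝ Z]

/-- The restriction of an operator `T : X* → Y` to the dual unit ball. -/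
noncomputable def evalBall (T : StrongDual ℝ X →L[ℝ] Y) (φ : DualBall X) : Y :=
  T (WeakDual.toStrongDual φ.1)

/-- `T` belongs to `UM(X*,Y)`: its restriction to the dual ball is universally
strongly measurable. -/
def MemUM (T : StrongDual ℝ X →L[ℝ] Y) : Prop :=
  ∀ (μ : Measure (DualBall X)), IsProbabilityMeasure μ → μ.Regular →
    AEStronglyMeasurable (evalBall T) μ

/-- `T` belongs to the ε-product `X ε Y`: its restriction to the dual ball is
weak*-to-norm continuous. -/
def MemEps (T : StrongDual ℝ X →L[ℝ] Y) : Prop :=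
  Continuous (evalBall T)

/-- `S` is `(ℓ^s_p, ℓ_p)`-summing. -/
def IsLpSumming (p : ℝ) (U : Submodule ℝ (StrongDual ℝ X →L[ℝ] Y))
    (S : U →L[ℝ] Z) : Prop :=
  ∃ K : ℝ, 0 ≤ K ∧ ∀ (n : ℕ) (T : Fin n → U),
    (∑ i, ‖S (T i)‖ ^ p) ^ (1/p) ≤
      K * ⨆ φ : DualBall X, (∑ i, ‖evalBall (T i : StrongDual ℝ X →L[ℝ] Y) φ‖ ^ p) ^ (1/p)

/-- `S` is `(ℓ^s_p, ℓ_p)`-controlled. -/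
def IsLpControlled (p : ℝ) (U : Submodule ℝ (StrongDual ℝ X →L[ℝ] Y))
    (S : U →L[ℝ] Z) : Prop :=
  ∃ K : ℝ, 0 ≤ K ∧ ∃ μ : Measure (DualBall X), IsProbabilityMeasure μ ∧ μ.Regular ∧
    ∀ T : U, ‖S T‖ ≤
      K * (∫ φ, ‖evalBall (T : StrongDual ℝ X →L[ℝ] Y) φ‖ ^ p ∂μ) ^ (1/p)

/-- SOT convergence of a sequence of operators. -/
def SOTConvergesTo (T : ℕ → (StrongDual ℝ X →L[ℝ] Y))
    (T₀ : StrongDual ℝ X →L[ℝ] Y) : Prop :=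
  ∀ x' : StrongDual ℝ X, Tendsto (fun n => ‖T n x' - T₀ x'‖) atTop (𝓝 0)


set_option linter.unusedSectionVars false
set_option maxHeartbeats 1000000

section RMK
open Set NNReal ENNReal

variable {Ω : Type*} [TopologicalSpace Ω] [CompactSpace Ω] [T2Space Ω]
  [MeasurableSpace Ω] [BorelSpace Ω] [Nonempty Ω]

variable (Λ : C(Ω, ℝ) →L[ℝ] ℝ)

/-- Test functions for the Riesz content of a set. -/
def testSet (C : Set Ω) : Set C(Ω, ℝ) := {f | (∀ x, 0 ≤ f x) ∧ ∀ x ∈ C, 1 ≤ f x}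

lemma one_mem_testSet (C : Set Ω) : (1 : C(Ω, ℝ)) ∈ testSet C :=
  ⟨fun _ => by norm_num, fun _ _ => by norm_num⟩

/-- The (real-valued) Riesz content associated to a positive functional. -/
noncomputable def lamr (C : Set Ω) : ℝ := sInf (Λ '' testSet C)

lemma lamr_image_nonempty (C : Set Ω) : (Λ '' testSet C).Nonempty :=
  ⟨Λ 1, 1, one_mem_testSet C, rfl⟩

variable {Λ}
variable (hpos : ∀ g : C(Ω, ℝ), (∀ x, 0 ≤ g x) → 0 ≤ Λ g)

section
include hpos

lemma lam_mono_fun {f g : C(Ω, ℝ)} (h : ∀ x, f x ≤ g x) : Λ f ≤ Λ g := by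
  have h0 : 0 ≤ Λ (g - f) := hpos _ (fun x => by
    simp only [ContinuousMap.sub_apply, sub_nonneg]; exact h x)
  rw [map_sub] at h0; linarith

lemma lamr_bddBelow (C : Set Ω) : BddBelow (Λ '' testSet C) :=
  ⟨0, by rintro y ⟨f, hf, rfl⟩; exact hpos f hf.1⟩

lemma lamr_nonneg (C : Set Ω) : 0 ≤ lamr Λ C :=
  le_csInf (lamr_image_nonempty Λ C) (by rintro y ⟨f, hf, rfl⟩; exact hpos f hf.1)

lemma lamr_le_test {C : Set Ω} {f : C(Ω, ℝ)} (hf : f ∈ testSet C) : lamr Λ C ≤ Λ f :=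
  csInf_le (lamr_bddBelow hpos C) ⟨f, hf, rfl⟩

lemma lamr_mono {C₁ C₂ : Set Ω} (h : C₁ ⊆ C₂) : lamr Λ C₁ ≤ lamr Λ C₂ :=
  csInf_le_csInf (lamr_bddBelow hpos C₁) (lamr_image_nonempty Λ C₂)
    (image_mono (fun f hf => ⟨hf.1, fun x hx => hf.2 x (h hx)⟩))

variable (hone : Λ 1 = 1)
include hone

lemma lamr_le_one (C : Set Ω) : lamr Λ C ≤ 1 :=
  (lamr_le_test hpos (one_mem_testSet C)).trans_eq hone

lemma one_le_lamr_univ : 1 ≤ lamr Λ (univ : Set Ω) := by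
  refine le_csInf (lamr_image_nonempty Λ _) ?_
  rintro y ⟨f, hf, rfl⟩
  calc (1:ℝ) = Λ 1 := hone.symm
  _ ≤ Λ f := lam_mono_fun hpos (fun x => by simpa using hf.2 x (mem_univ x))

lemma lamr_univ_eq : lamr Λ (univ : Set Ω) = 1 :=
  le_antisymm (lamr_le_one hpos hone _) (one_le_lamr_univ hpos hone)

omit hone

lemma lamr_union_le (C₁ C₂ : Set Ω) : lamr Λ (C₁ ∪ C₂) ≤ lamr Λ C₁ + lamr Λ C₂ := by
  refine le_of_forall_pos_le_add (fun ε hε => ?_)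
  obtain ⟨y₁, ⟨f₁, hf₁, rfl⟩, hy₁⟩ :=
    exists_lt_of_csInf_lt (lamr_image_nonempty Λ C₁)
      (lt_add_of_pos_right (lamr Λ C₁) (half_pos hε))
  obtain ⟨y₂, ⟨f₂, hf₂, rfl⟩, hy₂⟩ :=
    exists_lt_of_csInf_lt (lamr_image_nonempty Λ C₂)
      (lt_add_of_pos_right (lamr Λ C₂) (half_pos hε))
  have hmem : f₁ + f₂ ∈ testSet (C₁ ∪ C₂) := by
    constructor
    · intro x; have := hf₁.1 x; have := hf₂.1 x
      simp only [ContinuousMap.add_apply]; linarith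
    · rintro x (hx | hx) <;> simp only [ContinuousMap.add_apply]
      · have := hf₁.2 x hx; have := hf₂.1 x; linarith
      · have := hf₂.2 x hx; have := hf₁.1 x; linarith
  have := lamr_le_test hpos hmem
  rw [map_add] at this
  linarith

lemma lamr_union_disjoint {C₁ C₂ : Set Ω} (h₁ : IsClosed C₁) (h₂ : IsClosed C₂)
    (hd : Disjoint C₁ C₂) : lamr Λ (C₁ ∪ C₂) = lamr Λ C₁ + lamr Λ C₂ := by
  refine le_antisymm (lamr_union_le hpos C₁ C₂) ?_
  refine le_csInf (lamr_image_nonempty Λ _) ?_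
  rintro y ⟨f, hf, rfl⟩
  obtain ⟨u, hu0, hu1, hu01⟩ := exists_continuous_zero_one_of_isClosed h₁ h₂ hd
  have hmem₁ : f * (1 - u) ∈ testSet C₁ := by
    constructor
    · intro x
      have := hf.1 x; have := (hu01 x).2
      simp only [ContinuousMap.mul_apply, ContinuousMap.sub_apply, ContinuousMap.one_apply]
      nlinarith
    · intro x hx
      have h0 : u x = 0 := hu0 hx
      have := hf.2 x (mem_union_left _ hx)
      simp only [ContinuousMap.mul_apply, ContinuousMap.sub_apply, ContinuousMap.one_apply, h0]
      linarith
  have hmem₂ : f * u ∈ testSet C₂ := by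
    constructor
    · intro x
      have := hf.1 x; have := (hu01 x).1
      simp only [ContinuousMap.mul_apply]
      nlinarith
    · intro x hx
      have h1 : u x = 1 := hu1 hx
      have := hf.2 x (mem_union_right _ hx)
      simp only [ContinuousMap.mul_apply, h1]
      linarith
  have key : f * (1 - u) + f * u = f := by ext x; simp; ring
  have := add_le_add (lamr_le_test hpos hmem₁) (lamr_le_test hpos hmem₂)
  rw [← map_add, key] at this
  exact this

end

variable (hone : Λ 1 = 1)

instance (priority := 50) : WeaklyLocallyCompactSpace Ω :=
  ⟨fun _ => ⟨univ, isCompact_univ, Filter.univ_mem⟩⟩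

/-- The Riesz content associated to a positive normalized functional. -/
noncomputable def rieszCont : Content Ω where
  toFun K := Real.toNNReal (lamr Λ K)
  mono' K₁ K₂ h := Real.toNNReal_mono (lamr_mono hpos h)
  sup_disjoint' K₁ K₂ hd h₁ h₂ := by
    have : lamr Λ (↑(K₁ ⊔ K₂)) = lamr Λ K₁ + lamr Λ K₂ := by
      have : ((K₁ ⊔ K₂ : TopologicalSpace.Compacts Ω) : Set Ω) = ↑K₁ ∪ ↑K₂ := rfl
      rw [this]
      exact lamr_union_disjoint hpos h₁ h₂ hd
    rw [this, Real.toNNReal_add (lamr_nonneg hpos _) (lamr_nonneg hpos _)]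
  sup_le' K₁ K₂ := by
    have h1 : lamr Λ (↑(K₁ ⊔ K₂)) ≤ lamr Λ K₁ + lamr Λ K₂ := by
      have : ((K₁ ⊔ K₂ : TopologicalSpace.Compacts Ω) : Set Ω) = ↑K₁ ∪ ↑K₂ := rfl
      rw [this]; exact lamr_union_le hpos _ _
    calc Real.toNNReal (lamr Λ (↑(K₁ ⊔ K₂))) ≤ Real.toNNReal (lamr Λ K₁ + lamr Λ K₂) :=
          Real.toNNReal_mono h1
    _ ≤ _ := Real.toNNReal_add_le

/-- The Riesz measure. -/
noncomputable def rieszMu : Measure Ω := (rieszCont hpos).measure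

instance : (rieszMu hpos).Regular := Content.regular _

include hone in
lemma rieszMu_univ : rieszMu hpos univ = 1 := by
  rw [rieszMu, Content.measure_apply _ MeasurableSet.univ,
    Content.outerMeasure_of_isOpen _ univ isOpen_univ]
  unfold Content.innerContent
  have huniv : (rieszCont hpos) ⟨univ, isCompact_univ⟩ = 1 := by
    simp only [rieszCont, Content.mk_apply]
    have hc : ((⟨univ, isCompact_univ⟩ : TopologicalSpace.Compacts Ω) : Set Ω) = univ := rfl
    rw [hc, lamr_univ_eq hpos hone]
    simp
  apply le_antisymm
  · refine iSup₂_le (fun K _ => ?_)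
    exact le_trans (Content.mono _ _ _ (subset_univ _)) huniv.le
  · exact huniv.ge.trans (le_iSup₂_of_le ⟨univ, isCompact_univ⟩ (subset_univ _) le_rfl)

include hone in
lemma rieszMu_prob : IsProbabilityMeasure (rieszMu hpos) := ⟨rieszMu_univ hpos hone⟩

lemma lamr_le_measure {C : Set Ω} (hC : IsClosed C) :
    lamr Λ C ≤ (rieszMu hpos C).toReal := by
  have h1 : ((Real.toNNReal (lamr Λ C) : ℝ≥0∞)) ≤ rieszMu hpos C := by
    rw [rieszMu, Content.measure_apply _ hC.measurableSet]
    exact Content.le_outerMeasure_compacts _ ⟨C, hC.isCompact⟩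
  have h2 : rieszMu hpos C ≠ ⊤ := by
    rw [rieszMu, Content.measure_apply _ hC.measurableSet]
    exact ((rieszCont hpos).outerMeasure_lt_top_of_isCompact hC.isCompact).ne
  have h3 : lamr Λ C = ((Real.toNNReal (lamr Λ C) : ℝ≥0∞)).toReal := by
    simp [Real.coe_toNNReal _ (lamr_nonneg hpos C)]
  rw [h3]
  exact ENNReal.toReal_mono h2 h1

include hpos in
lemma Λ_le_mul_lamr {h : C(Ω, ℝ)} {C : Set Ω} {c : ℝ} (hc : 0 < c)
    (hbd : ∀ x, h x ≤ c) (hsupp : ∀ x, x ∉ C → h x = 0) (h0 : ∀ x, 0 ≤ h x) :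
    Λ h ≤ c * lamr Λ C := by
  have key : ∀ f ∈ testSet C, Λ h ≤ c * Λ f := by
    intro f hf
    have hpt : ∀ x, h x ≤ (c • f) x := by
      intro x
      by_cases hx : x ∈ C
      · have h1 : (1:ℝ) ≤ f x := hf.2 x hx
        simp only [ContinuousMap.smul_apply, smul_eq_mul]
        exact (hbd x).trans (le_mul_of_one_le_right hc.le h1)
      · simp only [ContinuousMap.smul_apply, smul_eq_mul, hsupp x hx]
        exact mul_nonneg hc.le (hf.1 x)
    have := lam_mono_fun hpos hpt
    rwa [_root_.map_smul, smul_eq_mul] at this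
  have hdiv : Λ h / c ≤ lamr Λ C := by
    refine le_csInf (lamr_image_nonempty Λ C) ?_
    rintro y ⟨f, hf, rfl⟩
    rw [div_le_iff₀ hc]
    linarith [key f hf]
  have := (div_le_iff₀ hc).mp hdiv
  linarith

include hone in
lemma Λ_le_integral (g : C(Ω, ℝ)) (hg : ∀ x, 0 ≤ g x) :
    Λ g ≤ ∫ x, g x ∂(rieszMu hpos) := by
  haveI : IsProbabilityMeasure (rieszMu hpos) := rieszMu_prob hpos hone
  set μ := rieszMu hpos with hμ
  have hgM : ∀ x, g x ≤ ‖g‖ := fun x =>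
    (le_abs_self _).trans (by simpa [Real.norm_eq_abs] using g.norm_coe_le_norm x)
  rcases eq_or_lt_of_le (norm_nonneg g) with hM0 | hM
  · have hg0 : g = 0 := by rw [← norm_eq_zero]; exact hM0.symm
    rw [hg0]
    simp
  set M := ‖g‖ with hMdef
  have hint : Integrable (fun x => g x) μ :=
    (BoundedContinuousFunction.integrable μ (BoundedContinuousFunction.mkOfCompact g))
  suffices H : ∀ n : ℕ, 0 < n → Λ g ≤ M / (n:ℝ) + ∫ x, g x ∂μ by
    have hten : Tendsto (fun n : ℕ => M / (n:ℝ) + ∫ x, g x ∂μ) atTop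
        (𝓝 (0 + ∫ x, g x ∂μ)) :=
      (tendsto_const_div_atTop_nhds_zero_nat M).add tendsto_const_nhds
    rw [zero_add] at hten
    exact ge_of_tendsto hten (eventually_atTop.2 ⟨1, fun n hn => H n hn⟩)
  intro n hn
  obtain ⟨m, rfl⟩ : ∃ m, n = m + 1 := ⟨n - 1, (Nat.succ_pred_eq_of_pos hn).symm⟩
  have hn' : (0:ℝ) < ((m+1 : ℕ) : ℝ) := by positivity
  set t : ℕ → ℝ := fun k => (k:ℝ) * M / ((m+1:ℕ):ℝ) with ht
  have htmono : ∀ k : ℕ, t k ≤ t (k+1) := by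
    intro k
    simp only [ht]
    have hMle := hM.le
    gcongr
    push_cast
    linarith
  set c : ℕ → C(Ω, ℝ) := fun k =>
    ⟨fun x => min (g x) (t (k+1)) - min (g x) (t k),
      ((g.continuous.min continuous_const).sub (g.continuous.min continuous_const))⟩ with hc
  have hc0 : ∀ k x, 0 ≤ c k x := by
    intro k x
    simp only [hc, ContinuousMap.coe_mk, sub_nonneg]
    exact min_le_min le_rfl (htmono k)
  have hM_div_pos : (0:ℝ) < M / ((m+1:ℕ):ℝ) := div_pos hM hn'
  have hstep : ∀ k : ℕ, t (k+1) - t k = M / ((m+1:ℕ):ℝ) := by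
    intro k
    simp only [ht]
    push_cast
    ring
  have hcbd : ∀ k x, c k x ≤ M / ((m+1:ℕ):ℝ) := by
    intro k x
    simp only [hc, ContinuousMap.coe_mk]
    rcases le_total (g x) (t k) with h | h
    · rw [min_eq_left (h.trans (htmono k)), min_eq_left h]
      simpa using hM_div_pos.le
    · rw [min_eq_right h]
      have h2 : min (g x) (t (k+1)) ≤ t (k+1) := min_le_right _ _
      linarith [hstep k]
  have hcsupp : ∀ k x, g x < t k → c k x = 0 := by
    intro k x hx
    simp only [hc, ContinuousMap.coe_mk]
    rw [min_eq_left hx.le, min_eq_left (hx.le.trans (htmono k))]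
    ring
  have hgsum : g = ∑ k ∈ Finset.range (m+1), c k := by
    ext x
    rw [ContinuousMap.sum_apply]
    have htel : ∑ k ∈ Finset.range (m+1), c k x
        = min (g x) (t (m+1)) - min (g x) (t 0) := by
      simp only [hc, ContinuousMap.coe_mk]
      exact Finset.sum_range_sub (fun k => min (g x) (t k)) (m+1)
    have ht0 : t 0 = 0 := by simp [ht]
    have htn : t (m+1) = M := by
      simp only [ht]
      field_simp
    rw [htel, ht0, htn, min_eq_left (hgM x), min_eq_right (hg x)]
    ring
  have hKclosed : ∀ k : ℕ, IsClosed {x : Ω | t k ≤ g x} := fun k =>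
    isClosed_le continuous_const g.continuous
  have step1 : Λ g ≤ ∑ k ∈ Finset.range (m+1),
      (M/((m+1:ℕ):ℝ)) * lamr Λ {x : Ω | t k ≤ g x} := by
    conv_lhs => rw [hgsum]
    rw [map_sum]
    apply Finset.sum_le_sum
    intro k _
    apply Λ_le_mul_lamr hpos hM_div_pos (hcbd k) ?_ (hc0 k)
    intro x hx
    exact hcsupp k x (by simpa using hx)
  have step2 : ∑ k ∈ Finset.range (m+1), (M/((m+1:ℕ):ℝ)) * lamr Λ {x : Ω | t k ≤ g x}
      ≤ M/((m+1:ℕ):ℝ)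
        + ∑ k ∈ Finset.range m, (M/((m+1:ℕ):ℝ)) * (μ {x : Ω | t (k+1) ≤ g x}).toReal := by
    rw [Finset.sum_range_succ']
    have hA : ∑ k ∈ Finset.range m, (M/((m+1:ℕ):ℝ)) * lamr Λ {x : Ω | t (k+1) ≤ g x}
        ≤ ∑ k ∈ Finset.range m, (M/((m+1:ℕ):ℝ)) * (μ {x : Ω | t (k+1) ≤ g x}).toReal :=
      Finset.sum_le_sum fun k _ =>
        mul_le_mul_of_nonneg_left (lamr_le_measure hpos (hKclosed _)) hM_div_pos.le
    have hB : (M/((m+1:ℕ):ℝ)) * lamr Λ {x : Ω | t 0 ≤ g x} ≤ M/((m+1:ℕ):ℝ) := by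
      have h1 := lamr_le_one hpos hone {x : Ω | t 0 ≤ g x}
      have h2 := lamr_nonneg hpos (Λ := Λ) {x : Ω | t 0 ≤ g x}
      nlinarith
    linarith
  have step3 : ∑ k ∈ Finset.range m, (M/((m+1:ℕ):ℝ)) * (μ {x : Ω | t (k+1) ≤ g x}).toReal
      ≤ ∫ x, g x ∂μ := by
    have hmeas : ∀ k : ℕ, MeasurableSet {x : Ω | t k ≤ g x} := fun k =>
      (hKclosed k).measurableSet
    have hindint : ∀ k : ℕ,
        Integrable ({x : Ω | t (k+1) ≤ g x}.indicator (fun _ => M/((m+1:ℕ):ℝ))) μ :=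
      fun k => (integrable_const _).indicator (hmeas (k+1))
    have heq : ∀ k : ℕ, (M/((m+1:ℕ):ℝ)) * (μ {x : Ω | t (k+1) ≤ g x}).toReal
        = ∫ x, {x : Ω | t (k+1) ≤ g x}.indicator (fun _ => M/((m+1:ℕ):ℝ)) x ∂μ := by
      intro k
      rw [MeasureTheory.integral_indicator_const _ (hmeas (k+1))]
      simp [mul_comm, Measure.real]
    have hrw : ∑ k ∈ Finset.range m, (M/((m+1:ℕ):ℝ)) * (μ {x : Ω | t (k+1) ≤ g x}).toReal
        = ∫ x, (∑ k ∈ Finset.range m,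
            {x : Ω | t (k+1) ≤ g x}.indicator (fun _ => M/((m+1:ℕ):ℝ)) x) ∂μ := by
      rw [MeasureTheory.integral_finset_sum _ (fun k _ => hindint k)]
      exact Finset.sum_congr rfl fun k _ => heq k
    rw [hrw]
    apply integral_mono (integrable_finset_sum _ (fun k _ => hindint k)) hint
    intro x
    set j := Nat.floor (((m+1:ℕ):ℝ) * g x / M) with hj
    have hterm : ∀ k ∈ Finset.range m,
        {x : Ω | t (k+1) ≤ g x}.indicator (fun _ => M/((m+1:ℕ):ℝ)) x
          ≤ if k < j then M/((m+1:ℕ):ℝ) else 0 := by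
      intro k _
      rw [Set.indicator_apply]
      by_cases hx : x ∈ {x : Ω | t (k+1) ≤ g x}
      · rw [if_pos hx]
        have h1 : ((k+1:ℕ):ℝ) * M / ((m+1:ℕ):ℝ) ≤ g x := hx
        have h2 : ((k+1:ℕ):ℝ) * M ≤ g x * ((m+1:ℕ):ℝ) := by
          rw [← div_le_iff₀ hn']
          exact h1
        have h3 : ((k+1:ℕ):ℝ) ≤ ((m+1:ℕ):ℝ) * g x / M := by
          rw [le_div_iff₀ hM]
          linarith
        have hkj : k + 1 ≤ j := Nat.le_floor h3
        rw [if_pos (Nat.lt_of_lt_of_le k.lt_succ_self hkj)]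
      · rw [if_neg hx]
        split_ifs
        · exact hM_div_pos.le
        · exact le_rfl
    calc (∑ k ∈ Finset.range m,
          {x : Ω | t (k+1) ≤ g x}.indicator (fun _ => M/((m+1:ℕ):ℝ)) x)
        ≤ ∑ k ∈ Finset.range m, (if k < j then M/((m+1:ℕ):ℝ) else 0) :=
          Finset.sum_le_sum hterm
      _ = ∑ k ∈ (Finset.range m).filter (· < j), M/((m+1:ℕ):ℝ) :=
          (Finset.sum_filter _ _).symm
      _ = ((Finset.range m).filter (· < j)).card • (M/((m+1:ℕ):ℝ)) :=
          Finset.sum_const _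
      _ ≤ j * (M/((m+1:ℕ):ℝ)) := by
          rw [nsmul_eq_mul]
          apply mul_le_mul_of_nonneg_right _ hM_div_pos.le
          have hsub : (Finset.range m).filter (· < j) ⊆ Finset.range j := fun k hk =>
            Finset.mem_range.mpr (Finset.mem_filter.mp hk).2
          have := Finset.card_le_card hsub
          rw [Finset.card_range] at this
          exact_mod_cast this
      _ ≤ g x := by
          have hjle : (j:ℝ) ≤ ((m+1:ℕ):ℝ) * g x / M := Nat.floor_le (by have := hg x; positivity)
          have h4 : (j:ℝ) * (M/((m+1:ℕ):ℝ)) ≤ (((m+1:ℕ):ℝ) * g x / M) * (M/((m+1:ℕ):ℝ)) :=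
            mul_le_mul_of_nonneg_right hjle hM_div_pos.le
          have h5 : (((m+1:ℕ):ℝ) * g x / M) * (M/((m+1:ℕ):ℝ)) = g x := by
            field_simp
          linarith
  linarith

include hpos hone in
theorem exists_rmk : ∃ μ : Measure Ω, IsProbabilityMeasure μ ∧ μ.Regular ∧
    ∀ g : C(Ω, ℝ), (∀ x, 0 ≤ g x) → Λ g ≤ ∫ x, g x ∂μ :=
  ⟨rieszMu hpos, rieszMu_prob hpos hone, inferInstance,
    fun g hg => Λ_le_integral hpos hone g hg⟩

end RMK


section DualBallFacts

variable (X : Type*) [NormedAddCommGroup X] [NormedSpace ℝ X]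

instance : CompactSpace (DualBall X) := by
  apply isCompact_iff_compactSpace.mp
  have h := WeakDual.isCompact_closedBall (𝕜 := ℝ) (E := X) 0 1
  have he : WeakDual.toStrongDual ⁻¹' Metric.closedBall (0 : StrongDual ℝ X) 1
      = {φ : WeakDual ℝ X | ‖WeakDual.toStrongDual φ‖ ≤ 1} := by
    ext φ
    simp [Metric.mem_closedBall, dist_zero_right]
  rwa [he] at h

instance : Nonempty (DualBall X) := ⟨⟨0, by simp⟩⟩

end DualBallFacts

/-- **Botelho–Santos Pietsch-type domination theorem.**  If `U` is a closed subspace of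
the ε-product `X ε Y` and `S : U → Z` is `(ℓ^s_p, ℓ_p)`-summing, then there are `K ≥ 0`
and a regular Borel probability measure `μ` on the dual ball `(B_{X*}, w*)` such that
`‖S T‖ ≤ K (∫ ‖T(x*)‖^p dμ)^{1/p}` for all `T ∈ U`. -/
theorem pietsch_domination_of_lp_summing
    [CompleteSpace X] [CompleteSpace Y] [CompleteSpace Z]
    (p : ℝ) (hp : 1 ≤ p)
    (U : Submodule ℝ (StrongDual ℝ X →L[ℝ] Y))
    (hUclosed : IsClosed (U : Set (StrongDual ℝ X →L[ℝ] Y)))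
    (hUeps : ∀ T ∈ U, MemEps T)
    (S : U →L[ℝ] Z) (hS : IsLpSumming p U S) :
    ∃ K : ℝ, 0 ≤ K ∧ ∃ μ : Measure (DualBall X), IsProbabilityMeasure μ ∧ μ.Regular ∧
      ∀ T : U, ‖S T‖ ≤
        K * (∫ φ, ‖evalBall (T : StrongDual ℝ X →L[ℝ] Y) φ‖ ^ p ∂μ) ^ (1/p) := by
  classical
  obtain ⟨K₀', hK₀', hsum⟩ := hS
  set K₀ := max K₀' 1 with hK₀def
  have hK₀1 : (1:ℝ) ≤ K₀ := le_max_right _ _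
  have hK₀pos : (0:ℝ) < K₀ := lt_of_lt_of_le one_pos hK₀1
  have hp0 : (0:ℝ) < p := lt_of_lt_of_le one_pos hp
  have hpne : p ≠ 0 := hp0.ne'
  have hcontT : ∀ T' : U,
      Continuous (fun φ : DualBall X => ‖evalBall (T' : StrongDual ℝ X →L[ℝ] Y) φ‖ ^ p) :=
    fun T' => ((hUeps _ T'.2).norm).rpow_const (fun x => Or.inr hp0.le)
  -- Step 1: pointwise form of the summing inequality via compactness
  have key : ∀ (n : ℕ) (T : Fin n → U), ∃ φ₀ : DualBall X,
      (∑ i, ‖S (T i)‖ ^ p)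
        ≤ K₀^p * ∑ i, ‖evalBall ((T i : U) : StrongDual ℝ X →L[ℝ] Y) φ₀‖ ^ p := by
    intro n T
    set h : DualBall X → ℝ :=
      fun φ => ∑ i, ‖evalBall ((T i : U) : StrongDual ℝ X →L[ℝ] Y) φ‖ ^ p with hh
    have hcont : Continuous h := continuous_finset_sum _ (fun i _ => hcontT (T i))
    have hnn : ∀ φ, 0 ≤ h φ := fun φ =>
      Finset.sum_nonneg fun i _ => Real.rpow_nonneg (norm_nonneg _) _
    obtain ⟨φ₀, -, hmax⟩ := isCompact_univ.exists_isMaxOn Set.univ_nonempty hcont.continuousOn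
    refine ⟨φ₀, ?_⟩
    have hsup : (⨆ φ : DualBall X, (h φ) ^ (1/p)) ≤ (h φ₀) ^ (1/p) :=
      ciSup_le fun φ =>
        Real.rpow_le_rpow (hnn φ) (isMaxOn_iff.mp hmax φ (Set.mem_univ φ)) (by positivity)
    have hsupnn : 0 ≤ ⨆ φ : DualBall X, (h φ) ^ (1/p) :=
      Real.iSup_nonneg fun φ => Real.rpow_nonneg (hnn φ) _
    have h1 : (∑ i, ‖S (T i)‖ ^ p) ^ (1/p) ≤ K₀ * (h φ₀) ^ (1/p) := by
      refine le_trans (hsum n T) ?_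
      calc K₀' * (⨆ φ : DualBall X, (h φ) ^ (1/p))
          ≤ K₀ * (⨆ φ : DualBall X, (h φ) ^ (1/p)) :=
            mul_le_mul_of_nonneg_right (le_max_left _ _) hsupnn
        _ ≤ K₀ * (h φ₀) ^ (1/p) := mul_le_mul_of_nonneg_left hsup hK₀pos.le
    have hA : (0:ℝ) ≤ ∑ i, ‖S (T i)‖ ^ p :=
      Finset.sum_nonneg fun i _ => Real.rpow_nonneg (norm_nonneg _) _
    have h2 := Real.rpow_le_rpow (Real.rpow_nonneg hA _) h1 hp0.le
    have e1 : ((∑ i, ‖S (T i)‖ ^ p) ^ (1/p)) ^ p = ∑ i, ‖S (T i)‖ ^ p := by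
      rw [← Real.rpow_mul hA, one_div_mul_cancel hpne, Real.rpow_one]
    have e2 : (K₀ * (h φ₀) ^ (1/p)) ^ p = K₀^p * h φ₀ := by
      rw [Real.mul_rpow hK₀pos.le (Real.rpow_nonneg (hnn φ₀) _),
        ← Real.rpow_mul (hnn φ₀), one_div_mul_cancel hpne, Real.rpow_one]
    rw [e1, e2] at h2
    exact h2
  -- Step 2: the convex cone F and the open convex set P
  set F : Set C(DualBall X, ℝ) := {b | ∃ (n : ℕ) (T : Fin n → U), ∀ φ,
    b φ = (∑ i, ‖S (T i)‖ ^ p)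
      - K₀^p * ∑ i, ‖evalBall ((T i : U) : StrongDual ℝ X →L[ℝ] Y) φ‖ ^ p} with hFdef
  have hF0 : (0 : C(DualBall X, ℝ)) ∈ F := ⟨0, Fin.elim0, fun φ => by simp⟩
  have hFadd : ∀ b₁ ∈ F, ∀ b₂ ∈ F, b₁ + b₂ ∈ F := by
    rintro b₁ ⟨n₁, T₁, h₁⟩ b₂ ⟨n₂, T₂, h₂⟩
    refine ⟨n₁ + n₂, Fin.append T₁ T₂, fun φ => ?_⟩
    have e1 : ∀ f : U → ℝ, ∑ i : Fin (n₁+n₂), f (Fin.append T₁ T₂ i)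
        = ∑ i : Fin n₁, f (T₁ i) + ∑ i : Fin n₂, f (T₂ i) := by
      intro f
      rw [Fin.sum_univ_add]
      simp [Fin.append_left, Fin.append_right]
    rw [ContinuousMap.add_apply, h₁ φ, h₂ φ, e1 (fun T' => ‖S T'‖ ^ p),
      e1 (fun T' => ‖evalBall ((T' : U) : StrongDual ℝ X →L[ℝ] Y) φ‖ ^ p)]
    ring
  have hFsmul : ∀ b ∈ F, ∀ c : ℝ, 0 ≤ c → c • b ∈ F := by
    rintro b ⟨n, T, hT⟩ c hc
    rcases eq_or_lt_of_le hc with rfl | hcpos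
    · rw [zero_smul]; exact hF0
    · refine ⟨n, fun i => (c ^ (1/p)) • T i, fun φ => ?_⟩
      have hcp : ((c:ℝ) ^ (1/p)) ^ p = c := by
        rw [← Real.rpow_mul hcpos.le, one_div_mul_cancel hpne, Real.rpow_one]
      have e2 : ∀ i, ‖S ((c ^ (1/p)) • T i)‖ ^ p = c * ‖S (T i)‖ ^ p := by
        intro i
        rw [_root_.map_smul, norm_smul, Real.norm_eq_abs, abs_of_nonneg (Real.rpow_nonneg hcpos.le _),
          Real.mul_rpow (Real.rpow_nonneg hcpos.le _) (norm_nonneg _), hcp]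
      have e3 : ∀ i, ‖evalBall (((c ^ (1/p)) • T i : U) : StrongDual ℝ X →L[ℝ] Y) φ‖ ^ p
          = c * ‖evalBall ((T i : U) : StrongDual ℝ X →L[ℝ] Y) φ‖ ^ p := by
        intro i
        have hev : evalBall (((c ^ (1/p)) • T i : U) : StrongDual ℝ X →L[ℝ] Y) φ
            = (c ^ (1/p)) • evalBall ((T i : U) : StrongDual ℝ X →L[ℝ] Y) φ := by
          simp [evalBall]
        rw [hev, norm_smul, Real.norm_eq_abs, abs_of_nonneg (Real.rpow_nonneg hcpos.le _),
          Real.mul_rpow (Real.rpow_nonneg hcpos.le _) (norm_nonneg _), hcp]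
      simp only [e2, e3]
      rw [ContinuousMap.smul_apply, smul_eq_mul, hT φ, ← Finset.mul_sum, ← Finset.mul_sum]
      ring
  have hFconvex : Convex ℝ F := fun x hx y hy a b ha hb _ =>
    hFadd _ (hFsmul x hx a ha) _ (hFsmul y hy b hb)
  set P : Set C(DualBall X, ℝ) := {b | ∀ φ, 0 < b φ} with hPdef
  have hPconvex : Convex ℝ P := by
    intro x hx y hy a b ha hb hab
    intro φ
    simp only [ContinuousMap.add_apply, ContinuousMap.smul_apply, smul_eq_mul]
    have hor : 0 < a ∨ 0 < b := by
      by_contra hcon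
      push_neg at hcon
      linarith [hcon.1, hcon.2]
    rcases hor with hpa | hpb
    · exact add_pos_of_pos_of_nonneg (mul_pos hpa (hx φ)) (mul_nonneg hb (hy φ).le)
    · exact add_pos_of_nonneg_of_pos (mul_nonneg ha (hx φ).le) (mul_pos hpb (hy φ))
  have hPopen : IsOpen P := by
    rw [Metric.isOpen_iff]
    intro b hb
    obtain ⟨φ₀, -, hmin⟩ :=
      isCompact_univ.exists_isMinOn Set.univ_nonempty b.continuous.continuousOn
    refine ⟨b φ₀, hb φ₀, fun g hg => ?_⟩
    intro φ
    have h1 : |g φ - b φ| ≤ ‖g - b‖ := by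
      simpa [ContinuousMap.sub_apply, Real.norm_eq_abs] using (g - b).norm_coe_le_norm φ
    have h2 : ‖g - b‖ < b φ₀ := by rw [← dist_eq_norm]; exact Metric.mem_ball.mp hg
    have h3 : b φ - g φ ≤ |g φ - b φ| := by
      rw [abs_sub_comm]; exact le_abs_self _
    have h4 := isMinOn_iff.mp hmin φ (Set.mem_univ φ)
    linarith
  have hdisj : Disjoint P F := by
    rw [Set.disjoint_left]
    intro b hbP hbF
    obtain ⟨n, T, hT⟩ := hbF
    obtain ⟨φ₀, hφ₀⟩ := key n T
    have := hbP φ₀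
    rw [hT φ₀] at this
    linarith
  -- Step 3: separation
  obtain ⟨f, u, hfu, huf⟩ := geometric_hahn_banach_open hPconvex hPopen hFconvex hdisj
  have hu0 : u ≤ 0 := by simpa using huf 0 hF0
  have h1P : (1 : C(DualBall X, ℝ)) ∈ P := fun φ => by norm_num
  have hf1 : f 1 < 0 := lt_of_lt_of_le (hfu 1 h1P) hu0
  set cval : ℝ := - f 1 with hcvaldef
  have hcval : 0 < cval := by simp only [hcvaldef]; linarith
  have hf1eq : f 1 = - cval := by simp [hcvaldef]
  have hFnonneg : ∀ b ∈ F, 0 ≤ f b := by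
    intro b hb
    by_contra hneg
    push_neg at hneg
    set tt : ℝ := (u - 1) / f b with htt
    have httpos : 0 < tt := div_pos_of_neg_of_neg (by linarith) hneg
    have hle := huf (tt • b) (hFsmul b hb tt httpos.le)
    rw [_root_.map_smul, smul_eq_mul] at hle
    have heq : tt * f b = u - 1 := by
      rw [htt, div_mul_cancel₀ _ hneg.ne]
    linarith
  have hfneg : ∀ g : C(DualBall X, ℝ), (∀ φ, 0 ≤ g φ) → f g ≤ 0 := by
    intro g hg
    by_contra hcon
    push_neg at hcon
    have hmem : g + (f g / (2 * cval)) • (1 : C(DualBall X, ℝ)) ∈ P := by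
      intro φ
      have := hg φ
      have hq : (0:ℝ) < f g / (2 * cval) := by positivity
      simp only [ContinuousMap.add_apply, ContinuousMap.smul_apply, ContinuousMap.one_apply,
        smul_eq_mul, mul_one]
      linarith
    have h2 := hfu _ hmem
    rw [map_add, _root_.map_smul, smul_eq_mul, hf1eq] at h2
    have e : f g / (2 * cval) * (- cval) = - (f g / 2) := by
      field_simp
    rw [e] at h2
    linarith
  -- Step 4: normalized positive functional
  set Λ : C(DualBall X, ℝ) →L[ℝ] ℝ := (- cval⁻¹) • f with hΛdef
  have hΛapp : ∀ g, Λ g = - cval⁻¹ * f g := fun g => rfl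
  have hΛpos : ∀ g : C(DualBall X, ℝ), (∀ φ, 0 ≤ g φ) → 0 ≤ Λ g := by
    intro g hg
    have h1 := hfneg g hg
    have h2 : (0:ℝ) < cval⁻¹ := inv_pos.mpr hcval
    rw [hΛapp]
    nlinarith
  have hΛone : Λ 1 = 1 := by
    rw [hΛapp, hf1eq]
    field_simp
  -- Step 5: the domination by Λ
  have keyT : ∀ T : U, ‖S T‖ ^ p
      ≤ K₀^p * Λ ⟨fun φ => ‖evalBall ((T : U) : StrongDual ℝ X →L[ℝ] Y) φ‖ ^ p,
          hcontT T⟩ := by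
    intro T
    set gT : C(DualBall X, ℝ) :=
      ⟨fun φ => ‖evalBall ((T : U) : StrongDual ℝ X →L[ℝ] Y) φ‖ ^ p, hcontT T⟩ with hgT
    have hbT : (‖S T‖ ^ p) • (1 : C(DualBall X, ℝ)) - (K₀^p) • gT ∈ F := by
      refine ⟨1, fun _ => T, fun φ => ?_⟩
      simp [hgT, Fin.sum_univ_one]
    have h0 := hFnonneg _ hbT
    rw [map_sub, _root_.map_smul, _root_.map_smul, smul_eq_mul, smul_eq_mul, hf1eq] at h0
    have hnormnn : (0:ℝ) ≤ ‖S T‖ ^ p := Real.rpow_nonneg (norm_nonneg _) _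
    have h1 : ‖S T‖ ^ p * cval ≤ K₀^p * (- f gT) := by nlinarith
    have h2 : ‖S T‖ ^ p ≤ K₀^p * (- f gT) / cval := (le_div_iff₀ hcval).mpr h1
    have h3 : K₀^p * Λ gT = K₀^p * (- f gT) / cval := by
      rw [hΛapp]
      field_simp
    rw [h3]
    exact h2
  -- Step 6: Riesz representation
  obtain ⟨μ, hprob, hreg, hint⟩ := exists_rmk hΛpos hΛone
  refine ⟨K₀, hK₀pos.le, μ, hprob, hreg, fun T => ?_⟩
  set gT : C(DualBall X, ℝ) :=
    ⟨fun φ => ‖evalBall ((T : U) : StrongDual ℝ X →L[ℝ] Y) φ‖ ^ p, hcontT T⟩ with hgT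
  have hgTnn : ∀ φ, 0 ≤ gT φ := fun φ => Real.rpow_nonneg (norm_nonneg _) _
  have h3 : Λ gT ≤ ∫ φ, ‖evalBall ((T : U) : StrongDual ℝ X →L[ℝ] Y) φ‖ ^ p ∂μ :=
    hint gT hgTnn
  have h4 : ‖S T‖ ^ p
      ≤ K₀^p * ∫ φ, ‖evalBall ((T : U) : StrongDual ℝ X →L[ℝ] Y) φ‖ ^ p ∂μ :=
    (keyT T).trans (mul_le_mul_of_nonneg_left h3 (Real.rpow_nonneg hK₀pos.le _))
  have hInn : 0 ≤ ∫ φ, ‖evalBall ((T : U) : StrongDual ℝ X →L[ℝ] Y) φ‖ ^ p ∂μ :=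
    integral_nonneg (fun φ => Real.rpow_nonneg (norm_nonneg _) _)
  have h5 := Real.rpow_le_rpow (Real.rpow_nonneg (norm_nonneg _) _) h4 (by positivity : (0:ℝ) ≤ 1/p)
  have e1 : (‖S T‖ ^ p) ^ (1/p) = ‖S T‖ := by
    rw [← Real.rpow_mul (norm_nonneg _), mul_one_div_cancel hpne, Real.rpow_one]
  have e2 : (K₀^p * ∫ φ, ‖evalBall ((T : U) : StrongDual ℝ X →L[ℝ] Y) φ‖ ^ p ∂μ) ^ (1/p)
      = K₀ * (∫ φ, ‖evalBall ((T : U) : StrongDual ℝ X →L[ℝ] Y) φ‖ ^ p ∂μ) ^ (1/p) := by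
    rw [Real.mul_rpow (Real.rpow_nonneg hK₀pos.le _) hInn,
      ← Real.rpow_mul hK₀pos.le, mul_one_div_cancel hpne, Real.rpow_one]
  rw [e1, e2] at h5
  exact h5
end

section
/- Let X, Y, Z be Banach spaces, 1 ≤ p < ∞, let U be a closed subspace of UM(X*,Y), and let S : U → Z be an operator. Then S is (ℓ^s_p,ℓ_p)-controlled if and only if there exist μ ∈ P(B_{X*}), a closed subspace W of the Lebesgue–Bochner space L_p(μ,Y), and a bounded operator S̃ : W → Z such that i_μ(U) ⊆ W and S = S̃ ∘ (i_μ restricted to U). -/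
private lemma norm_toLp_rpow {α E : Type*} [MeasurableSpace α] {μ : MeasureTheory.Measure α}
    [NormedAddCommGroup E] {p : ℝ} (hp : 0 < p) {f : α → E}
    (h : MeasureTheory.MemLp f (ENNReal.ofReal p) μ) :
    ‖h.toLp f‖ = (∫ a, ‖f a‖ ^ p ∂μ) ^ (1/p) := by
  have hp0 : ENNReal.ofReal p ≠ 0 := by simp [ENNReal.ofReal_eq_zero, not_le, hp]
  have hpt : (ENNReal.ofReal p).toReal = p := ENNReal.toReal_ofReal hp.le
  have hnn : (0:ℝ) ≤ (∫ a, ‖f a‖ ^ p ∂μ) ^ p⁻¹ :=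
    Real.rpow_nonneg (MeasureTheory.integral_nonneg fun a => Real.rpow_nonneg (norm_nonneg _) _) _
  rw [MeasureTheory.Lp.norm_toLp, h.eLpNorm_eq_integral_rpow_norm hp0 ENNReal.ofReal_ne_top, hpt,
    ENNReal.toReal_ofReal hnn, one_div]

set_option maxHeartbeats 800000
set_option synthInstance.maxHeartbeats 200000


open MeasureTheory Filter Topology

variable {X Y Z : Type*} [NormedAddCommGroup X] [NormedSpace ℝ X]
  [NormedAddCommGroup Y] [NormedSpace ℝ Y] [NormedAddCommGroup Z] [NormedSpace ℝ Z]

/-- An operator `S` defined on a closed subspace `U` of `UM(X*,Y)` is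
`(ℓ^s_p, ℓ_p)`-controlled iff it factors as `S = S̃ ∘ i_μ|_U` through a closed subspace `W`
of the Lebesgue–Bochner space `L_p(μ,Y)`, where `i_μ` sends `T` to the class of
`T|_{B_{X*}}` in `L_p(μ,Y)`. -/
theorem isLpControlled_iff_factors
    [CompleteSpace X] [CompleteSpace Y] [CompleteSpace Z]
    (p : ℝ) (hp : 1 ≤ p) [Fact (1 ≤ ENNReal.ofReal p)]
    (U : Submodule ℝ (StrongDual ℝ X →L[ℝ] Y))
    (hUclosed : IsClosed (U : Set (StrongDual ℝ X →L[ℝ] Y)))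
    (hUM : ∀ T ∈ U, MemUM T)
    (S : U →L[ℝ] Z) :
    IsLpControlled p U S ↔
      ∃ μ : Measure (DualBall X), IsProbabilityMeasure μ ∧ μ.Regular ∧
        ∃ W : Submodule ℝ (Lp Y (ENNReal.ofReal p) μ),
          IsClosed (W : Set (Lp Y (ENNReal.ofReal p) μ)) ∧
          ∃ Stilde : W →L[ℝ] Z,
            ∀ T : U,
              ∃ (h : MemLp (evalBall (T : StrongDual ℝ X →L[ℝ] Y))
                    (ENNReal.ofReal p) μ)
                (hW : MemLp.toLp _ h ∈ W),
                Stilde ⟨MemLp.toLp _ h, hW⟩ = S T := by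
  have hp0 : (0:ℝ) < p := lt_of_lt_of_le one_pos hp
  constructor
  · rintro ⟨K, hK0, μ, hprob, hreg, hbound⟩
    haveI := hprob
    have hmem : ∀ T : U, MemLp (evalBall (T : StrongDual ℝ X →L[ℝ] Y))
        (ENNReal.ofReal p) μ := by
      intro T
      refine MemLp.of_bound (hUM T.1 T.2 μ hprob hreg) ‖(T : StrongDual ℝ X →L[ℝ] Y)‖
        (Filter.Eventually.of_forall fun φ => ?_)
      calc ‖evalBall (T : StrongDual ℝ X →L[ℝ] Y) φ‖
          ≤ ‖(T : StrongDual ℝ X →L[ℝ] Y)‖ * ‖WeakDual.toStrongDual φ.1‖ :=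
            (T : StrongDual ℝ X →L[ℝ] Y).le_opNorm _
        _ ≤ ‖(T : StrongDual ℝ X →L[ℝ] Y)‖ * 1 :=
            mul_le_mul_of_nonneg_left φ.2 (norm_nonneg (T : StrongDual ℝ X →L[ℝ] Y))
        _ = _ := mul_one _
    let j : U →ₗ[ℝ] Lp Y (ENNReal.ofReal p) μ :=
      { toFun := fun T => (hmem T).toLp _
        map_add' := fun T T' => by
          refine Eq.trans (MemLp.toLp_congr (hmem (T + T')) ((hmem T).add (hmem T')) ?_)
            (MemLp.toLp_add (hmem T) (hmem T'))
          exact Filter.EventuallyEq.of_eq (funext fun φ => by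
            simp [evalBall])
        map_smul' := fun c T => by
          rw [RingHom.id_apply]
          refine Eq.trans (MemLp.toLp_congr (hmem (c • T)) ((hmem T).const_smul c) ?_)
            (MemLp.toLp_const_smul c (hmem T))
          exact Filter.EventuallyEq.of_eq (funext fun φ => by
            simp [evalBall]) }
    have hjnorm : ∀ T : U, ‖j T‖ =
        (∫ φ, ‖evalBall (T : StrongDual ℝ X →L[ℝ] Y) φ‖ ^ p ∂μ) ^ (1/p) :=
      fun T => norm_toLp_rpow hp0 (hmem T)
    have hS : ∀ T : U, ‖S T‖ ≤ K * ‖j T‖ := fun T => by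
      rw [hjnorm]; exact hbound T
    have hwd : ∀ T T' : U, j T = j T' → S T = S T' := by
      intro T T' hTT'
      letI : AddCommGroup U := @Submodule.addCommGroup ℝ (StrongDual ℝ X →L[ℝ] Y) _ _ _ U
      have h1 : ‖S (T - T')‖ ≤ K * ‖j (T - T')‖ := hS (T - T')
      have hsub : S (T - T') = S T - S T' := S.map_sub T T'
      have hjsub : j (T - T') = j T - j T' := j.map_sub T T'
      rw [hsub, hjsub, hTT', sub_self, norm_zero, mul_zero] at h1
      exact sub_eq_zero.mp (norm_le_zero_iff.mp h1)
    set V := LinearMap.range j with hV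
    have hsec : ∀ v : V, ∃ T : U, j T = (v : Lp Y (ENNReal.ofReal p) μ) := fun v => v.2
    choose sec hsecspec using hsec
    let g : V →ₗ[ℝ] Z :=
      { toFun := fun v => S (sec v)
        map_add' := fun v w => by
          rw [← map_add]
          exact hwd _ _ (by simp [_root_.map_add, hsecspec])
        map_smul' := fun c v => by
          rw [RingHom.id_apply, ← _root_.map_smul]
          exact hwd _ _ (by simp [_root_.map_smul, hsecspec]) }
    have hgb : ∀ v : V, ‖g v‖ ≤ K * ‖v‖ := by
      intro v
      have h1 := hS (sec v)
      rwa [hsecspec v] at h1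
    let g' : V →L[ℝ] Z := g.mkContinuous K hgb
    let W := V.topologicalClosure
    have hnorme : ∀ v : V, ‖Submodule.inclusion V.le_topologicalClosure v‖ ≤ 1 * ‖v‖ :=
      fun v => le_of_eq (by rw [one_mul]; rfl)
    let e : V →L[ℝ] W :=
      (Submodule.inclusion V.le_topologicalClosure).mkContinuous 1 hnorme
    have h_e : IsUniformInducing e :=
      (AddMonoidHomClass.isometry_of_norm e fun v => rfl).isUniformInducing
    have h_dense : DenseRange (⇑e) := by
      intro w
      rw [closure_subtype]
      have himg : Subtype.val '' Set.range (⇑e) = (V : Set (Lp Y (ENNReal.ofReal p) μ)) := by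
        ext x
        constructor
        · rintro ⟨_, ⟨v, rfl⟩, rfl⟩
          exact v.2
        · intro hx
          exact ⟨e ⟨x, hx⟩, ⟨⟨x, hx⟩, rfl⟩, rfl⟩
      rw [himg, ← Submodule.topologicalClosure_coe]
      exact w.2
    let Stilde : W →L[ℝ] Z := g'.extend e
    refine ⟨μ, hprob, hreg, W, V.isClosed_topologicalClosure, Stilde, fun T => ?_⟩
    have hWmem : (hmem T).toLp _ ∈ W := V.le_topologicalClosure (LinearMap.mem_range_self j T)
    refine ⟨hmem T, hWmem, ?_⟩
    have h1 : (⟨(hmem T).toLp _, hWmem⟩ : W) = e ⟨j T, LinearMap.mem_range_self j T⟩ :=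
      Subtype.ext rfl
    rw [h1]
    show Stilde (e ⟨j T, LinearMap.mem_range_self j T⟩) = S T
    rw [ContinuousLinearMap.extend_eq (h_dense := h_dense) (h_e := h_e)]
    exact hwd _ _ (hsecspec ⟨j T, LinearMap.mem_range_self j T⟩)
  · rintro ⟨μ, hprob, hreg, W, hWclosed, Stilde, hfac⟩
    obtain ⟨K, hKdef⟩ : ∃ K : ℝ, K = ‖Stilde‖ := ⟨_, rfl⟩
    have hK0 : (0:ℝ) ≤ K := by rw [hKdef]; exact norm_nonneg Stilde
    refine ⟨K, hK0, μ, hprob, hreg, fun T => ?_⟩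
    obtain ⟨h, hW, heq⟩ := hfac T
    have h1 := Stilde.le_opNorm (⟨MemLp.toLp _ h, hW⟩ : W)
    have h2 : ‖(⟨MemLp.toLp _ h, hW⟩ : W)‖ =
        (∫ φ, ‖evalBall (T : StrongDual ℝ X →L[ℝ] Y) φ‖ ^ p ∂μ) ^ (1/p) := by
      rw [show ‖(⟨MemLp.toLp _ h, hW⟩ : W)‖ = ‖MemLp.toLp _ h‖ from rfl, norm_toLp_rpow hp0 h]
    rw [heq, h2, ← hKdef] at h1
    exact h1
end

section
/- Let X, Y, Z be Banach spaces and 1 ≤ p < ∞. Suppose that L_1(μ) is separable for every μ ∈ P(B_{X*}) and that Y is separable. Let U be a closed subspace of UM(X*,Y) and let S : U → Z be an (ℓ^s_p,ℓ_p)-controlled operator. Then S has separable range. -/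
open MeasureTheory Filter Topology

variable {X Y Z : Type*} [NormedAddCommGroup X] [NormedSpace ℝ X]
  [NormedAddCommGroup Y] [NormedSpace ℝ Y] [NormedAddCommGroup Z] [NormedSpace ℝ Z]

section Aux

open MeasureTheory Filter Topology Set symmDiff ENNReal

theorem isSeparable_range_of_dist_le {ι E F : Type*} [PseudoMetricSpace E] [PseudoMetricSpace F]
    (f : ι → E) (g : ι → F) (K : ℝ) (hK : 0 ≤ K)
    (h : ∀ i j, dist (f i) (f j) ≤ K * dist (g i) (g j))
    (hg : TopologicalSpace.IsSeparable (Set.range g)) :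
    TopologicalSpace.IsSeparable (Set.range f) := by
  classical
  cases isEmpty_or_nonempty ι with
  | inl hι => rw [Set.range_eq_empty f]; exact Set.countable_empty.isSeparable
  | inr hι =>
  obtain ⟨i₀⟩ := hι
  obtain ⟨c, hc, hsub⟩ := hg
  set Φ : F × ℕ → E := fun dn =>
    if h : ∃ i, dist (g i) dn.1 < 1/(dn.2+1) then f h.choose else f i₀ with hΦ
  refine ⟨Φ '' (c ×ˢ (Set.univ : Set ℕ)), (hc.prod Set.countable_univ).image _, ?_⟩
  rintro - ⟨i, rfl⟩
  rw [Metric.mem_closure_iff]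
  intro ε hε
  have hδ : 0 < ε / (2 * (K + 1)) := by positivity
  obtain ⟨n, hn⟩ := exists_nat_one_div_lt hδ
  have hgi : g i ∈ closure c := hsub ⟨i, rfl⟩
  obtain ⟨d, hd, hdist⟩ := Metric.mem_closure_iff.1 hgi (1/(n+1)) (by positivity)
  have hex : ∃ j, dist (g j) d < 1/(n+1) := ⟨i, hdist⟩
  have hΦval : Φ (d, n) = f hex.choose := dif_pos hex
  refine ⟨Φ (d, n), ⟨(d, n), ⟨hd, trivial⟩, rfl⟩, ?_⟩
  rw [hΦval]
  have hj := hex.choose_spec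
  have h1 : dist (g i) (g hex.choose) ≤ dist (g i) d + dist (g hex.choose) d :=
    dist_triangle_right _ _ _
  have h2 : dist (f i) (f hex.choose) ≤ K * dist (g i) (g hex.choose) := h i _
  have h3 : dist (g i) (g hex.choose) < 2 * (ε / (2 * (K + 1))) := by
    have := hn
    push_cast at this ⊢
    nlinarith [hdist, hj]
  have hKpos : (0:ℝ) < K + 1 := by linarith
  calc dist (f i) (f hex.choose) ≤ K * dist (g i) (g hex.choose) := h2
    _ ≤ K * (2 * (ε / (2 * (K + 1)))) := mul_le_mul_of_nonneg_left h3.le hK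
    _ < ε := by
        rw [show K * (2 * (ε / (2 * (K + 1)))) = ε * K / (K + 1) by field_simp,
          div_lt_iff₀ hKpos]
        nlinarith

theorem isSeparable_measure_of_L1 {α : Type*} [MeasurableSpace α]
    (μ : Measure α) [IsFiniteMeasure μ]
    (h : TopologicalSpace.SeparableSpace (Lp ℝ 1 μ)) : MeasureTheory.IsSeparable μ := by
  obtain ⟨D, Dcount, Ddense⟩ := TopologicalSpace.exists_countable_dense (Lp ℝ 1 μ)
  set g : Lp ℝ 1 μ → α → ℝ := fun f => (Lp.aestronglyMeasurable f).mk f with hg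
  have hgmeas : ∀ f, StronglyMeasurable (g f) :=
    fun f => (Lp.aestronglyMeasurable f).stronglyMeasurable_mk
  have hgae : ∀ f : Lp ℝ 1 μ, ⇑f =ᵐ[μ] g f := fun f => (Lp.aestronglyMeasurable f).ae_eq_mk
  refine ⟨⟨(fun f => {x | 1/2 < g f x}) '' D, Dcount.image _, ?_, ?_⟩⟩
  · rintro - ⟨f, -, rfl⟩
    exact measurableSet_lt measurable_const (hgmeas f).measurable
  · intro s ms hμs ε εpos
    have hind : MemLp (s.indicator (fun _ => (1:ℝ))) 1 μ :=
      memLp_indicator_const 1 ms (1:ℝ) (Or.inr hμs)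
    obtain ⟨f, hfD, hf⟩ :=
      Metric.mem_closure_iff.1 (Ddense (hind.toLp _)) (ε/4) (by linarith)
    refine ⟨{x | 1/2 < g f x}, ⟨f, hfD, rfl⟩, ?_⟩
    -- pointwise lower bound on the symmetric difference
    set t := {x | 1/2 < g f x}
    have hsub : s ∆ t ⊆ {x | (2:ℝ≥0∞)⁻¹ ≤ ‖s.indicator (fun _ => (1:ℝ)) x - g f x‖₊} := by
      rintro x (⟨hxs, hxt⟩ | ⟨hxt, hxs⟩)
      · have h1 : s.indicator (fun _ => (1:ℝ)) x = 1 := Set.indicator_of_mem hxs _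
        have h2 : g f x ≤ 1/2 := le_of_not_gt hxt
        have : (1:ℝ)/2 ≤ ‖s.indicator (fun _ => (1:ℝ)) x - g f x‖ := by
          rw [h1, Real.norm_eq_abs, abs_of_nonneg (by linarith)]
          linarith
        simp only [Set.mem_setOf_eq]
        rw [show ((2:ℝ≥0∞)⁻¹ : ℝ≥0∞) = ENNReal.ofReal (1/2) by
          rw [ENNReal.ofReal_div_of_pos (by norm_num)]; norm_num,
          ← ENNReal.ofReal_coe_nnreal, coe_nnnorm]
        exact ENNReal.ofReal_le_ofReal this
      · have h1 : s.indicator (fun _ => (1:ℝ)) x = 0 := Set.indicator_of_notMem hxs _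
        have h2 : (1:ℝ)/2 < g f x := hxt
        have : (1:ℝ)/2 ≤ ‖s.indicator (fun _ => (1:ℝ)) x - g f x‖ := by
          rw [h1, Real.norm_eq_abs, zero_sub, abs_neg, abs_of_pos (by linarith)]
          linarith
        simp only [Set.mem_setOf_eq]
        rw [show ((2:ℝ≥0∞)⁻¹ : ℝ≥0∞) = ENNReal.ofReal (1/2) by
          rw [ENNReal.ofReal_div_of_pos (by norm_num)]; norm_num,
          ← ENNReal.ofReal_coe_nnreal, coe_nnnorm]
        exact ENNReal.ofReal_le_ofReal this
    -- Markov
    have haemeas : AEMeasurable (fun x => (‖s.indicator (fun _ => (1:ℝ)) x - g f x‖₊ : ℝ≥0∞)) μ := by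
      exact (hind.aestronglyMeasurable.sub (hgmeas f).aestronglyMeasurable).enorm
    have hmarkov := mul_meas_ge_le_lintegral₀ haemeas (2:ℝ≥0∞)⁻¹
    have hμsd : μ (s ∆ t) ≤ 2 * ∫⁻ x, ‖s.indicator (fun _ => (1:ℝ)) x - g f x‖₊ ∂μ := by
      have h1 : μ (s ∆ t) ≤ μ {x | (2:ℝ≥0∞)⁻¹ ≤ ‖s.indicator (fun _ => (1:ℝ)) x - g f x‖₊} :=
        measure_mono hsub
      have h2 : (2:ℝ≥0∞)⁻¹ * μ (s ∆ t) ≤ ∫⁻ x, ‖s.indicator (fun _ => (1:ℝ)) x - g f x‖₊ ∂μ :=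
        le_trans (mul_le_mul_right h1 _) hmarkov
      calc μ (s ∆ t) = 2 * ((2:ℝ≥0∞)⁻¹ * μ (s ∆ t)) := by
            rw [← mul_assoc, ENNReal.mul_inv_cancel (by norm_num) (by norm_num), one_mul]
        _ ≤ 2 * ∫⁻ x, ‖s.indicator (fun _ => (1:ℝ)) x - g f x‖₊ ∂μ :=
            mul_le_mul_right h2 _
    -- relate the lintegral to the L1 distance
    have heq : (∫⁻ x, ‖s.indicator (fun _ => (1:ℝ)) x - g f x‖₊ ∂μ)
        = eLpNorm (⇑(hind.toLp _ - f)) 1 μ := by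
      rw [eLpNorm_one_eq_lintegral_enorm]
      refine lintegral_congr_ae ?_
      filter_upwards [hind.coeFn_toLp, hgae f, Lp.coeFn_sub (hind.toLp _) f] with x h1 h2 h3
      rw [h3, Pi.sub_apply, h1, h2, enorm_eq_nnnorm]
    have hlt : eLpNorm (⇑(hind.toLp _ - f)) 1 μ < ENNReal.ofReal (ε/2) := by
      have hnorm : ‖hind.toLp _ - f‖ = (eLpNorm (⇑(hind.toLp _ - f)) 1 μ).toReal := Lp.norm_def _
      have hfin : eLpNorm (⇑(hind.toLp _ - f)) 1 μ ≠ ∞ := (Lp.eLpNorm_lt_top _).ne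
      rw [← ENNReal.ofReal_toReal hfin, ← hnorm]
      rw [ENNReal.ofReal_lt_ofReal_iff (by linarith)]
      rw [dist_eq_norm] at hf
      linarith
    calc μ (s ∆ t) ≤ 2 * eLpNorm (⇑(hind.toLp _ - f)) 1 μ := heq ▸ hμsd
      _ < 2 * ENNReal.ofReal (ε/2) := by
          refine ENNReal.mul_lt_mul_right ?_ ?_ hlt <;> norm_num
      _ = ENNReal.ofReal ε := by
          rw [← ENNReal.ofReal_ofNat, ← ENNReal.ofReal_mul (by norm_num)]
          congr 1
          ring

end Aux

set_option synthInstance.maxHeartbeats 1000000 in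
set_option maxHeartbeats 1000000 in
/-- If `L_1(μ)` is separable for every regular Borel probability measure `μ` on the dual
ball of `X`, `Y` is separable, and `S` is an `(ℓ^s_p, ℓ_p)`-controlled operator defined on
a closed subspace `U` of `UM(X*,Y)`, then `S` has separable range. -/
theorem separable_range_of_lp_controlled
    [CompleteSpace X] [CompleteSpace Y] [CompleteSpace Z]
    (p : ℝ) (hp : 1 ≤ p)
    (hL1 : ∀ μ : Measure (DualBall X), IsProbabilityMeasure μ → μ.Regular →
      TopologicalSpace.SeparableSpace (Lp ℝ 1 μ))
    (hYsep : TopologicalSpace.SeparableSpace Y)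
    (U : Submodule ℝ (StrongDual ℝ X →L[ℝ] Y))
    (hUclosed : IsClosed (U : Set (StrongDual ℝ X →L[ℝ] Y)))
    (hUM : ∀ T ∈ U, MemUM T)
    (S : U →L[ℝ] Z) (hS : IsLpControlled p U S) :
    TopologicalSpace.IsSeparable (Set.range fun T : U => S T) := by
  obtain ⟨K, hK, μ, hprob, hreg, hbound⟩ := hS
  haveI := hprob
  haveI : MeasureTheory.IsSeparable μ := isSeparable_measure_of_L1 μ (hL1 μ hprob hreg)
  haveI := hYsep
  have hp0 : (0:ℝ) < p := lt_of_lt_of_le one_pos hp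
  set q : ENNReal := ENNReal.ofReal p with hq
  haveI : Fact (1 ≤ q) := ⟨by rw [hq, ← ENNReal.ofReal_one]; exact ENNReal.ofReal_le_ofReal hp⟩
  haveI : Fact (q ≠ ⊤) := ⟨ENNReal.ofReal_ne_top⟩
  have hqtop : q ≠ ⊤ := ENNReal.ofReal_ne_top
  have hq0 : q ≠ 0 := by
    rw [hq, Ne, ENNReal.ofReal_eq_zero, not_le]; exact hp0
  have hqtoReal : q.toReal = p := ENNReal.toReal_ofReal hp0.le
  have hmem : ∀ T : U, MemLp (evalBall (T : StrongDual ℝ X →L[ℝ] Y)) q μ := by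
    intro T
    refine MemLp.of_bound (hUM T T.2 μ hprob hreg) ‖(T : StrongDual ℝ X →L[ℝ] Y)‖ ?_
    filter_upwards with φ
    calc ‖evalBall (T : StrongDual ℝ X →L[ℝ] Y) φ‖
        ≤ ‖(T : StrongDual ℝ X →L[ℝ] Y)‖ * ‖WeakDual.toStrongDual φ.1‖ :=
          ContinuousLinearMap.le_opNorm _ _
      _ ≤ ‖(T : StrongDual ℝ X →L[ℝ] Y)‖ :=
          mul_le_of_le_one_right (ContinuousLinearMap.opNorm_nonneg _) φ.2
  set J : U → Lp Y q μ := fun T => (hmem T).toLp _ with hJ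
  have hkey : ∀ T T' : U, dist (S T) (S T') ≤ K * dist (J T) (J T') := by
    intro T T'
    letI : AddCommGroup U := @Submodule.addCommGroup ℝ (StrongDual ℝ X →L[ℝ] Y) _ _ _ U
    have hsubfun : evalBall ((↑(T - T')) : StrongDual ℝ X →L[ℝ] Y)
        = fun φ => evalBall (T : StrongDual ℝ X →L[ℝ] Y) φ
            - evalBall (T' : StrongDual ℝ X →L[ℝ] Y) φ := by
      funext φ
      simp [evalBall]
    have hdistJ : dist (J T) (J T')
        = (eLpNorm (evalBall ((↑(T - T')) : StrongDual ℝ X →L[ℝ] Y)) q μ).toReal := by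
      rw [Lp.dist_def]
      congr 1
      refine eLpNorm_congr_ae ?_
      filter_upwards [(hmem T).coeFn_toLp, (hmem T').coeFn_toLp] with φ h1 h2
      rw [hsubfun, Pi.sub_apply, hJ]
      simp only
      rw [h1, h2]
    have heval : eLpNorm (evalBall ((↑(T - T')) : StrongDual ℝ X →L[ℝ] Y)) q μ
        = ENNReal.ofReal
            ((∫ φ, ‖evalBall ((↑(T - T')) : StrongDual ℝ X →L[ℝ] Y) φ‖ ^ p ∂μ) ^ p⁻¹) := by
      rw [(hmem (T - T')).eLpNorm_eq_integral_rpow_norm hq0 hqtop, hqtoReal]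
    have hintnn : (0:ℝ) ≤ (∫ φ, ‖evalBall ((↑(T - T')) : StrongDual ℝ X →L[ℝ] Y) φ‖ ^ p ∂μ) ^ p⁻¹ := by
      positivity
    have hdistJ' : dist (J T) (J T')
        = (∫ φ, ‖evalBall ((↑(T - T')) : StrongDual ℝ X →L[ℝ] Y) φ‖ ^ p ∂μ) ^ p⁻¹ := by
      rw [hdistJ, heval, ENNReal.toReal_ofReal hintnn]
    have hST : dist (S T) (S T') = ‖S (T - T')‖ := by
      rw [dist_eq_norm]
      exact congrArg norm (map_sub S T T').symm
    rw [hST, hdistJ']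
    have := hbound (T - T')
    rwa [one_div] at this
  have hJsep : TopologicalSpace.IsSeparable (Set.range J) :=
    TopologicalSpace.IsSeparable.of_separableSpace _
  exact isSeparable_range_of_dist_le (fun T : U => S T) J K hK hkey hJsep
end

section
/- Let X be a Banach space and 1 ≤ p < ∞. Every S ∈ X*** satisfies, for all n ∈ ℕ and all x**_1,…,x**_n ∈ X**, the inequality (Σ_{i=1}^n |⟨S, x**_i⟩|^p)^{1/p} ≤ ‖S‖ · sup_{x* ∈ B_{X*}} (Σ_{i=1}^n |⟨x**_i, x*⟩|^p)^{1/p}; that is, S is (ℓ^s_p,ℓ_p)-summing as an operator from X** (viewed as a subspace of L(X*,ℝ)) to ℝ, with constant K = ‖S‖. -/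
open Filter Topology

/-- The old Mathlib `NormedSpace.Dual` (removed since): the continuous dual `E →L[𝕜] 𝕜`. -/
abbrev NormedSpace.Dual (𝕜 : Type*) [NontriviallyNormedField 𝕜] (E : Type*)
    [SeminormedAddCommGroup E] [NormedSpace 𝕜 E] : Type _ :=
  E →L[𝕜] 𝕜

private lemma sign_mul_self_eq_abs (x : ℝ) : Real.sign x * x = |x| := by
  rcases lt_trichotomy x 0 with h | h | h
  · rw [Real.sign_of_neg h, abs_of_neg h]; ring
  · simp [h]
  · rw [Real.sign_of_pos h, abs_of_pos h]; ring

private lemma abs_sign_le_one (x : ℝ) : |Real.sign x| ≤ 1 := by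
  rcases lt_trichotomy x 0 with h | h | h
  · simp [Real.sign_of_neg h]
  · simp [h]
  · simp [Real.sign_of_pos h]

/-- Every element `S` of the third dual `X***` is `(ℓ^s_p, ℓ_p)`-summing as an operator
from `X**` (viewed inside `L(X*,ℝ)`) to `ℝ`, with constant `K = ‖S‖`:
`(Σ |⟨S, x**_i⟩|^p)^{1/p} ≤ ‖S‖ · sup_{x* ∈ B_{X*}} (Σ |⟨x**_i, x*⟩|^p)^{1/p}`. -/
theorem third_dual_lp_summing
    {X : Type*} [NormedAddCommGroup X] [NormedSpace ℝ X] [CompleteSpace X]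
    (p : ℝ) (hp : 1 ≤ p)
    (S : NormedSpace.Dual ℝ (NormedSpace.Dual ℝ (NormedSpace.Dual ℝ X)))
    (n : ℕ) (x'' : Fin n → NormedSpace.Dual ℝ (NormedSpace.Dual ℝ X)) :
    (∑ i, |S (x'' i)| ^ p) ^ (1/p) ≤
      ‖S‖ * ⨆ x' : {x' : NormedSpace.Dual ℝ X // ‖x'‖ ≤ 1},
        (∑ i, |x'' i x'.1| ^ p) ^ (1/p) := by
  classical
  have hp0 : (0 : ℝ) < p := lt_of_lt_of_le one_pos hp
  set M := ⨆ x' : {x' : NormedSpace.Dual ℝ X // ‖x'‖ ≤ 1},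
      (∑ i, |x'' i x'.1| ^ p) ^ (1/p) with hMdef
  -- boundedness of the defining family
  have hbdd : BddAbove (Set.range fun x' : {x' : NormedSpace.Dual ℝ X // ‖x'‖ ≤ 1} =>
      (∑ i, |x'' i x'.1| ^ p) ^ (1/p)) := by
    refine ⟨(∑ i, ‖x'' i‖ ^ p) ^ (1/p), ?_⟩
    rintro _ ⟨x', rfl⟩
    refine Real.rpow_le_rpow
      (Finset.sum_nonneg fun i _ => Real.rpow_nonneg (abs_nonneg _) _)
      (Finset.sum_le_sum fun i _ => ?_) (by positivity)
    exact Real.rpow_le_rpow (abs_nonneg _)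
      (by simpa using (x'' i).unit_le_opNorm x'.1 x'.2) hp0.le
  have hle : ∀ x' : NormedSpace.Dual ℝ X, ‖x'‖ ≤ 1 →
      (∑ i, |x'' i x'| ^ p) ^ (1/p) ≤ M := by
    intro x' h
    exact le_ciSup hbdd ⟨x', h⟩
  have hM0 : 0 ≤ M :=
    le_trans (Real.rpow_nonneg
      (Finset.sum_nonneg fun i _ => Real.rpow_nonneg (abs_nonneg _) _) _)
      (hle 0 (by simp))
  -- homogeneous bound
  have hhom : ∀ x' : NormedSpace.Dual ℝ X,
      (∑ i, |x'' i x'| ^ p) ^ (1/p) ≤ M * ‖x'‖ := by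
    intro x'
    rcases eq_or_ne x' 0 with rfl | hx
    · simp [Real.zero_rpow hp0.ne', Real.zero_rpow (inv_ne_zero hp0.ne')]
    · have hc : (0 : ℝ) < ‖x'‖ := norm_pos_iff.2 hx
      set u : NormedSpace.Dual ℝ X := ‖x'‖⁻¹ • x' with hu
      have hun : ‖u‖ ≤ 1 := by
        rw [hu, norm_smul, norm_inv, norm_norm, inv_mul_cancel₀ hc.ne']
      have hval : ∀ i, |x'' i x'| = ‖x'‖ * |x'' i u| := by
        intro i
        have : x'' i u = ‖x'‖⁻¹ * x'' i x' := by
          simp [hu, map_smul]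
        rw [this, abs_mul, abs_inv, abs_of_pos hc]
        field_simp
      have hsum : (∑ i, |x'' i x'| ^ p) = ‖x'‖ ^ p * ∑ i, |x'' i u| ^ p := by
        rw [Finset.mul_sum]
        refine Finset.sum_congr rfl fun i _ => ?_
        rw [hval i, Real.mul_rpow hc.le (abs_nonneg _)]
      rw [hsum, Real.mul_rpow (by positivity)
        (Finset.sum_nonneg fun i _ => Real.rpow_nonneg (abs_nonneg _) _)]
      have heq : ((‖x'‖ : ℝ) ^ p) ^ (1/p) = ‖x'‖ := by
        rw [← Real.rpow_mul hc.le, mul_one_div, div_self hp0.ne', Real.rpow_one]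
      rw [heq]
      calc ‖x'‖ * (∑ i, |x'' i u| ^ p) ^ (1/p) ≤ ‖x'‖ * M := by
            exact mul_le_mul_of_nonneg_left (hle u hun) hc.le
        _ = M * ‖x'‖ := mul_comm _ _
  set a : Fin n → ℝ := fun i => S (x'' i) with ha
  set t : ℝ := ∑ i, |a i| ^ p with htdef
  have ht0 : 0 ≤ t :=
    Finset.sum_nonneg fun i _ => Real.rpow_nonneg (abs_nonneg _) _
  rcases ht0.eq_or_lt with ht | ht
  · rw [← ht, Real.zero_rpow (by positivity)]
    exact mul_nonneg (norm_nonneg _) hM0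
  -- main case: t > 0
  set b : Fin n → ℝ := fun i => Real.sign (a i) * |a i| ^ (p - 1) with hb
  have hba : ∀ i, b i * a i = |a i| ^ p := by
    intro i
    rcases eq_or_ne (a i) 0 with h | h
    · simp [hb, h, Real.zero_rpow hp0.ne']
    · have : b i * a i = |a i| ^ (p - 1) * (Real.sign (a i) * a i) := by ring
      rw [this, sign_mul_self_eq_abs, ← Real.rpow_add_one (abs_ne_zero.2 h) (p - 1),
        sub_add_cancel]
  have hb_abs : ∀ i, |b i| ≤ |a i| ^ (p - 1) := by
    intro i
    simp only [hb]
    rw [abs_mul, abs_of_nonneg (Real.rpow_nonneg (abs_nonneg _) _)]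
    have := mul_le_mul_of_nonneg_right (abs_sign_le_one (a i))
      (Real.rpow_nonneg (abs_nonneg (a i)) (p - 1))
    simpa using this
  set y : NormedSpace.Dual ℝ (NormedSpace.Dual ℝ X) := ∑ i, b i • x'' i with hy
  have hSy : S y = t := by
    rw [hy, map_sum]
    simp only [map_smul, smul_eq_mul]
    exact Finset.sum_congr rfl fun i _ => hba i
  set K : ℝ := t ^ (1 - 1/p) with hK
  have hK0 : 0 < K := Real.rpow_pos_of_pos ht _
  -- Hölder: pointwise bound on y
  have hhold : ∀ x' : NormedSpace.Dual ℝ X,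
      ∑ i, |b i| * |x'' i x'| ≤ K * (∑ i, |x'' i x'| ^ p) ^ (1/p) := by
    intro x'
    have step1 : ∑ i, |b i| * |x'' i x'| ≤ ∑ i, |a i| ^ (p - 1) * |x'' i x'| :=
      Finset.sum_le_sum fun i _ =>
        mul_le_mul_of_nonneg_right (hb_abs i) (abs_nonneg _)
    rcases eq_or_lt_of_le hp with hp1 | hp1
    · -- p = 1
      have h1 : ∀ i, |a i| ^ (p - 1) = 1 := by
        intro i; rw [← hp1, sub_self, Real.rpow_zero]
      have hK1 : K = 1 := by rw [hK, ← hp1]; norm_num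
      calc ∑ i, |b i| * |x'' i x'| ≤ ∑ i, |a i| ^ (p - 1) * |x'' i x'| := step1
        _ = ∑ i, |x'' i x'| := by simp [h1]
        _ = K * (∑ i, |x'' i x'| ^ p) ^ (1/p) := by
            rw [hK1, one_mul, ← hp1]
            simp [Real.rpow_one]
    · -- p > 1
      have hpq : p.HolderConjugate (p / (p - 1)) := .conjExponent hp1
      have holder := Real.inner_le_Lp_mul_Lq_of_nonneg Finset.univ hpq.symm
        (f := fun i => |a i| ^ (p - 1)) (g := fun i => |x'' i x'|)
        (fun i _ => Real.rpow_nonneg (abs_nonneg _) _)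
        (fun i _ => abs_nonneg _)
      have hexp : ∀ i, (|a i| ^ (p - 1)) ^ (p / (p - 1)) = |a i| ^ p := by
        intro i
        rw [← Real.rpow_mul (abs_nonneg _)]
        congr 1
        have h1 : p - 1 ≠ 0 := sub_ne_zero.2 hp1.ne'
        field_simp
      have hinv : 1 / (p / (p - 1)) = 1 - 1/p := by
        rw [one_div_div]
        field_simp
      calc ∑ i, |b i| * |x'' i x'| ≤ ∑ i, |a i| ^ (p - 1) * |x'' i x'| := step1
        _ ≤ (∑ i, (|a i| ^ (p - 1)) ^ (p / (p - 1))) ^ (1 / (p / (p - 1))) *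
              (∑ i, |x'' i x'| ^ p) ^ (1/p) := holder
        _ = K * (∑ i, |x'' i x'| ^ p) ^ (1/p) := by
            rw [hK, htdef]
            congr 1
            rw [hinv]
            congr 1
            exact Finset.sum_congr rfl fun i _ => hexp i
  -- operator norm bound on y
  have hynorm : ‖y‖ ≤ K * M := by
    refine ContinuousLinearMap.opNorm_le_bound _ (mul_nonneg hK0.le hM0) fun x' => ?_
    have h1 : ‖y x'‖ ≤ ∑ i, |b i| * |x'' i x'| := by
      rw [hy]
      simp only [ContinuousLinearMap.coe_sum', Finset.sum_apply,
        ContinuousLinearMap.coe_smul', Pi.smul_apply, smul_eq_mul]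
      calc ‖∑ i, b i * x'' i x'‖ ≤ ∑ i, ‖b i * x'' i x'‖ := norm_sum_le _ _
        _ = ∑ i, |b i| * |x'' i x'| := by
            refine Finset.sum_congr rfl fun i _ => ?_
            rw [Real.norm_eq_abs, abs_mul]
    calc ‖y x'‖ ≤ ∑ i, |b i| * |x'' i x'| := h1
      _ ≤ K * (∑ i, |x'' i x'| ^ p) ^ (1/p) := hhold x'
      _ ≤ K * (M * ‖x'‖) := mul_le_mul_of_nonneg_left (hhom x') hK0.le
      _ = K * M * ‖x'‖ := by ring
  -- conclude
  have hmain : t ≤ ‖S‖ * (K * M) := by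
    calc t = S y := hSy.symm
      _ ≤ |S y| := le_abs_self _
      _ = ‖S y‖ := (Real.norm_eq_abs _).symm
      _ ≤ ‖S‖ * ‖y‖ := S.le_opNorm y
      _ ≤ ‖S‖ * (K * M) := mul_le_mul_of_nonneg_left hynorm (norm_nonneg _)
  have hsplit : t = K * t ^ (1/p) := by
    rw [hK, ← Real.rpow_add ht, sub_add_cancel, Real.rpow_one]
  have : K * t ^ (1/p) ≤ K * (‖S‖ * M) := by
    rw [← hsplit]
    calc t ≤ ‖S‖ * (K * M) := hmain
      _ = K * (‖S‖ * M) := by ring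
  have hfin : t ^ (1/p) ≤ ‖S‖ * M := le_of_mul_le_mul_left this hK0
  exact hfin
end

section
/- Let X and Y be Banach spaces. If X contains no subspace isomorphic to ℓ_1, then every T ∈ L(X*,Y) with separable range belongs to UM(X*,Y), i.e., the restriction of T to B_{X*} is strongly μ-measurable for every regular Borel probability measure μ on (B_{X*}, w*). -/
open MeasureTheory Filter Topology

variable {X Y Z : Type*} [NormedAddCommGroup X] [NormedSpace ℝ X]
  [NormedAddCommGroup Y] [NormedSpace ℝ Y] [NormedAddCommGroup Z] [NormedSpace ℝ Z]

/-- `X` contains no subspace isomorphic to `ℓ_1`: there is no bounded-below operator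
(i.e. isomorphic embedding) from `ℓ_1` into `X`. -/
def ContainsNoL1 (X : Type*) [NormedAddCommGroup X] [NormedSpace ℝ X] : Prop :=
  ¬ ∃ (J : lp (fun _ : ℕ => ℝ) 1 →L[ℝ] X) (c : ℝ), 0 < c ∧ ∀ v, c * ‖v‖ ≤ ‖J v‖


section Helpers




/-- Helly/Goldstine-type approximation: any `F ∈ X**` can be approximated, at finitely many
functionals simultaneously, by an element of `X` of norm at most `M > ‖F‖`. -/
lemma exists_approx_aux (F : StrongDual ℝ (StrongDual ℝ X)) {M : ℝ} (hM : ‖F‖ < M)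
    {ι : Type*} [Fintype ι] (φ : ι → StrongDual ℝ X) {ε : ℝ} (hε : 0 < ε) :
    ∃ x : X, ‖x‖ ≤ M ∧ ∀ i, |φ i x - F (φ i)| < ε := by
  classical
  have hM0 : 0 < M := lt_of_le_of_lt (norm_nonneg F) hM
  set S : Set (ι → ℝ) := closure {p : ι → ℝ | ∃ x : X, ‖x‖ ≤ M ∧ p = fun i => φ i x} with hS
  have hmem : ∀ x : X, ‖x‖ ≤ M → (fun i => φ i x) ∈ S := fun x hx =>
    subset_closure ⟨x, hx, rfl⟩
  have hSconv : Convex ℝ S := by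
    apply Convex.closure
    rintro p ⟨x, hx, rfl⟩ q ⟨y, hy, rfl⟩ a b ha hb hab
    refine ⟨a • x + b • y, ?_, ?_⟩
    · calc ‖a • x + b • y‖ ≤ ‖a • x‖ + ‖b • y‖ := norm_add_le _ _
        _ ≤ a * M + b * M := by
            rw [norm_smul, norm_smul, Real.norm_eq_abs, Real.norm_eq_abs, abs_of_nonneg ha,
              abs_of_nonneg hb]
            exact add_le_add (by nlinarith [norm_nonneg x]) (by nlinarith [norm_nonneg y])
        _ = M := by nlinarith
    · funext i
      simp [map_add, _root_.map_smul, smul_eq_mul]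
  have hc : (fun i => F (φ i)) ∈ S := by
    by_contra hc
    obtain ⟨f, u, hfu, huc⟩ := geometric_hahn_banach_closed_point hSconv isClosed_closure hc
    -- decompose f as a finite combination of coordinates
    set t : ι → ℝ := fun i => f (Pi.single i 1) with ht
    have hf_eq : ∀ p : ι → ℝ, f p = ∑ i, p i * t i := by
      intro p
      have hp : p = ∑ i, (p i) • (Pi.single i (1 : ℝ) : ι → ℝ) := by
        ext j
        simp [Finset.sum_apply, Pi.single_apply]
      conv_lhs => rw [hp]
      rw [map_sum]
      congr 1
      funext i
      rw [_root_.map_smul, smul_eq_mul, mul_comm]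
    set ψ : StrongDual ℝ X := ∑ i, t i • φ i with hψ
    have hψx : ∀ x : X, ψ x = ∑ i, t i * φ i x := by
      intro x
      rw [hψ]
      simp [ContinuousLinearMap.sum_apply]
    have hfvec : ∀ x : X, f (fun i => φ i x) = ψ x := by
      intro x
      rw [hf_eq, hψx]
      congr 1; funext i; ring
    have hu_pos : 0 < u := by
      have h0 : (0 : ι → ℝ) ∈ S := by
        have := hmem 0 (by simpa using hM0.le)
        convert this using 1; funext i; simp
      have := hfu _ h0
      simpa using this
    have hψle : ∀ x : X, ‖x‖ ≤ 1 → |ψ x| ≤ u / M := by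
      intro x hx
      have h1 : ψ (M • x) < u := by
        rw [← hfvec]
        apply hfu
        apply hmem
        rw [norm_smul, Real.norm_eq_abs, abs_of_pos hM0]
        nlinarith
      have h2 : ψ (M • (-x)) < u := by
        rw [← hfvec]
        apply hfu
        apply hmem
        rw [norm_smul, Real.norm_eq_abs, abs_of_pos hM0, norm_neg]
        nlinarith
      rw [_root_.map_smul, smul_eq_mul] at h1
      rw [_root_.map_smul, map_neg, smul_eq_mul] at h2
      rw [abs_le]
      constructor
      · rw [neg_le, le_div_iff₀ hM0]; nlinarith
      · rw [le_div_iff₀ hM0]; nlinarith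
    have hψnorm : ‖ψ‖ ≤ u / M := by
      apply ContinuousLinearMap.opNorm_le_bound _ (div_nonneg hu_pos.le hM0.le)
      intro x
      rcases eq_or_ne x 0 with rfl | hx0
      · simp
      · have hxn : (0:ℝ) < ‖x‖ := norm_pos_iff.2 hx0
        have := hψle (‖x‖⁻¹ • x) (by rw [norm_smul]; simp [abs_of_pos hxn, inv_mul_cancel₀ hxn.ne'])
        rw [_root_.map_smul, smul_eq_mul, abs_mul, abs_of_pos (inv_pos.2 hxn)] at this
        rw [Real.norm_eq_abs]
        calc |ψ x| = ‖x‖ * (‖x‖⁻¹ * |ψ x|) := by field_simp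
          _ ≤ ‖x‖ * (u / M) := by nlinarith
          _ = u / M * ‖x‖ := by ring
    have hFψ : f (fun i => F (φ i)) = F ψ := by
      rw [hf_eq, hψ]
      rw [map_sum]
      congr 1; funext i
      rw [_root_.map_smul, smul_eq_mul, mul_comm]
    have : u < u := by
      calc u < f (fun i => F (φ i)) := huc
        _ = F ψ := hFψ
        _ ≤ |F ψ| := le_abs_self _
        _ ≤ ‖F‖ * ‖ψ‖ := by
            have := F.le_opNorm ψ
            simpa [Real.norm_eq_abs] using this
        _ ≤ ‖F‖ * (u / M) := by
            have := norm_nonneg F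
            nlinarith [norm_nonneg ψ]
        _ < M * (u / M) := by
            apply mul_lt_mul_of_pos_right hM (div_pos hu_pos hM0)
        _ = u := by field_simp
    exact lt_irrefl _ this
  rw [hS, Metric.mem_closure_iff] at hc
  obtain ⟨p, ⟨x, hx, rfl⟩, hdist⟩ := hc ε hε
  refine ⟨x, hx, fun i => ?_⟩
  rw [dist_pi_lt_iff hε] at hdist
  have := hdist i
  rw [Real.dist_eq, abs_sub_comm] at this
  exact this


/-- Generic recursive construction of a sequence satisfying step-wise extendable properties. -/
lemma exists_seq_of_step {α : Type*} (Q : α → Prop) (P : ∀ n, (Fin n → α) → Prop)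
    (h0 : P 0 (fun i => i.elim0))
    (hstep : ∀ n v, P n v → ∃ x, Q x ∧ P (n+1) (Fin.snoc v x)) :
    ∃ x : ℕ → α, (∀ n, Q (x n)) ∧ ∀ n, P n (fun i => x i) := by
  classical
  let f : ∀ n, {v : Fin n → α // P n v} := fun n =>
    Nat.rec ⟨fun i => i.elim0, h0⟩
      (fun n p => ⟨Fin.snoc p.1 (Classical.choose (hstep n p.1 p.2)),
        (Classical.choose_spec (hstep n p.1 p.2)).2⟩) n
  set x : ℕ → α := fun n => (f (n+1)).1 (Fin.last n) with hx
  have hsnoc : ∀ n, (f (n+1)).1 = Fin.snoc (f n).1 (Classical.choose (hstep n (f n).1 (f n).2)) :=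
    fun n => rfl
  have hlast : ∀ n, x n = Classical.choose (hstep n (f n).1 (f n).2) := by
    intro n
    rw [hx]
    simp only [hsnoc n, Fin.snoc_last]
  have hcoh : ∀ n (i : Fin n), (f n).1 i = x i := by
    intro n
    induction n with
    | zero => exact fun i => i.elim0
    | succ n ih =>
      intro i
      refine Fin.lastCases ?_ ?_ i
      · simp only [Fin.val_last, hx]
      · intro j
        rw [hsnoc n, Fin.snoc_castSucc, ih j]
        simp
  refine ⟨x, fun n => ?_, fun n => ?_⟩
  · rw [hlast n]
    exact (Classical.choose_spec (hstep n (f n).1 (f n).2)).1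
  · have := (f n).2
    have heq : (fun i : Fin n => x i) = (f n).1 := by
      funext i; rw [hcoh n i]
    rw [heq]
    exact this

/-- From a bounded sequence with "independent cells" witnessed by norm-one functionals,
build an embedding of `ℓ¹` into `X`. -/
lemma exists_l1_embedding {X : Type*} [NormedAddCommGroup X] [NormedSpace ℝ X] [CompleteSpace X]
    (x : ℕ → X) (M' : ℝ) (hb : ∀ n, ‖x n‖ ≤ M') {α β : ℝ} (hαβ : α < β)
    (hcell : ∀ n (s : Fin n → Bool), ∃ φ : X →L[ℝ] ℝ, ‖φ‖ ≤ 1 ∧ ∀ i : Fin n,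
      (s i = true → β < φ (x i)) ∧ (s i = false → φ (x i) < α)) :
    ∃ (J : lp (fun _ : ℕ => ℝ) 1 →L[ℝ] X) (c : ℝ), 0 < c ∧ ∀ v, c * ‖v‖ ≤ ‖J v‖ := by
  classical
  have hM0 : 0 ≤ M' := le_trans (norm_nonneg (x 0)) (hb 0)
  -- summability facts
  have hnorm1 : ∀ v : lp (fun _ : ℕ => ℝ) 1, HasSum (fun n => ‖v n‖) ‖v‖ := by
    intro v
    have := lp.hasSum_norm (p := 1) (by norm_num) v
    simpa using this
  have hsumnorm : ∀ v : lp (fun _ : ℕ => ℝ) 1, Summable (fun n => ‖v n • x n‖) := by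
    intro v
    refine Summable.of_nonneg_of_le (fun n => norm_nonneg _) (fun n => ?_)
      (((hnorm1 v).summable).mul_right M')
    rw [norm_smul]
    exact mul_le_mul_of_nonneg_left (hb n) (norm_nonneg _)
  have hsum : ∀ v : lp (fun _ : ℕ => ℝ) 1, Summable (fun n => v n • x n) :=
    fun v => Summable.of_norm (hsumnorm v)
  -- the linear map
  let J₀ : lp (fun _ : ℕ => ℝ) 1 →ₗ[ℝ] X :=
    { toFun := fun v => ∑' n, v n • x n
      map_add' := by
        intro v w
        have h1 : ∀ n, ((v + w : lp (fun _ : ℕ => ℝ) 1) n) • x n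
            = v n • x n + w n • x n := by
          intro n
          rw [lp.coeFn_add]
          simp [add_smul]
        calc (∑' n, ((v + w : lp (fun _ : ℕ => ℝ) 1) n) • x n)
            = ∑' n, (v n • x n + w n • x n) := by exact tsum_congr h1
          _ = (∑' n, v n • x n) + ∑' n, w n • x n := Summable.tsum_add (hsum v) (hsum w)
      map_smul' := by
        intro c v
        have h1 : ∀ n, ((c • v : lp (fun _ : ℕ => ℝ) 1) n) • x n = c • (v n • x n) := by
          intro n
          rw [lp.coeFn_smul]
          simp [smul_smul]
        calc (∑' n, ((c • v : lp (fun _ : ℕ => ℝ) 1) n) • x n)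
            = ∑' n, c • (v n • x n) := tsum_congr h1
          _ = c • ∑' n, v n • x n := Summable.tsum_const_smul c (hsum v) }
  have hJbound : ∀ v : lp (fun _ : ℕ => ℝ) 1, ‖J₀ v‖ ≤ (M' + 1) * ‖v‖ := by
    intro v
    have h1 : ‖∑' n, v n • x n‖ ≤ ∑' n, ‖v n • x n‖ := norm_tsum_le_tsum_norm (hsumnorm v)
    have h2 : (∑' n, ‖v n • x n‖) ≤ ∑' n, ‖v n‖ * M' := by
      refine Summable.tsum_le_tsum (fun n => ?_) (hsumnorm v) (((hnorm1 v).summable).mul_right M')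
      rw [norm_smul]
      exact mul_le_mul_of_nonneg_left (hb n) (norm_nonneg _)
    have h3 : (∑' n, ‖v n‖ * M') = ‖v‖ * M' := by
      rw [tsum_mul_right, (hnorm1 v).tsum_eq]
    have hvn : 0 ≤ ‖v‖ := norm_nonneg v
    calc ‖J₀ v‖ ≤ ∑' n, ‖v n • x n‖ := h1
      _ ≤ ‖v‖ * M' := by rw [← h3]; exact h2
      _ ≤ (M' + 1) * ‖v‖ := by nlinarith
  let J : lp (fun _ : ℕ => ℝ) 1 →L[ℝ] X := LinearMap.mkContinuous J₀ (M' + 1) hJbound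
  refine ⟨J, (β - α) / 2, by linarith, fun v => ?_⟩
  have hJv : J v = ∑' n, v n • x n := rfl
  -- lower bound
  have key : ∀ n : ℕ, (β - α) * (∑ k ∈ Finset.range n, ‖v k‖)
      ≤ 2 * ‖J v‖ + 2 * M' * (∑' k, ‖v (k + n)‖) := by
    intro n
    obtain ⟨φ, hφn, hφ⟩ := hcell n (fun i => decide (0 ≤ v (i : ℕ)))
    obtain ⟨ψ, hψn, hψ⟩ := hcell n (fun i => ! decide (0 ≤ v (i : ℕ)))
    have happ : ∀ (θ : X →L[ℝ] ℝ), HasSum (fun k => v k * θ (x k)) (θ (J v)) := by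
      intro θ
      have h := ((hsum v).hasSum.mapL θ)
      rw [← hJv] at h
      have heq : (fun k => θ (v k • x k)) = fun k => v k * θ (x k) := by
        funext k; rw [_root_.map_smul, smul_eq_mul]
      rwa [heq] at h
    have hdiff : HasSum (fun k => v k * φ (x k) - v k * ψ (x k)) (φ (J v) - ψ (J v)) :=
      (happ φ).sub (happ ψ)
    set d : ℕ → ℝ := fun k => v k * φ (x k) - v k * ψ (x k) with hd
    have hdsum : Summable d := hdiff.summable
    have hsplit : (∑ k ∈ Finset.range n, d k) + (∑' k, d (k + n)) = φ (J v) - ψ (J v) := by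
      rw [Summable.sum_add_tsum_nat_add n hdsum, hdiff.tsum_eq]
    -- finite part lower bound
    have hfin : (β - α) * (∑ k ∈ Finset.range n, ‖v k‖) ≤ ∑ k ∈ Finset.range n, d k := by
      rw [Finset.mul_sum]
      apply Finset.sum_le_sum
      intro k hk
      have hkn : k < n := Finset.mem_range.1 hk
      have hφk := hφ ⟨k, hkn⟩
      have hψk := hψ ⟨k, hkn⟩
      simp only at hφk hψk
      rcases le_or_gt 0 (v k) with hv | hv
      · have h1 : β < φ (x k) := hφk.1 (by simpa using hv)
        have h2 : ψ (x k) < α := hψk.2 (by simpa using hv)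
        have hn : ‖v k‖ = v k := by rw [Real.norm_eq_abs, abs_of_nonneg hv]
        have : (β - α) * (v k : ℝ) ≤ v k * φ (x k) - v k * ψ (x k) := by
          nlinarith [mul_le_mul_of_nonneg_left (by linarith : β - α ≤ φ (x k) - ψ (x k)) hv]
        rw [hn]
        simpa [hd] using this
      · have h1 : φ (x k) < α := hφk.2 (by simp [not_le.2 hv])
        have h2 : β < ψ (x k) := hψk.1 (by simp [not_le.2 hv])
        have hn : ‖v k‖ = -(v k : ℝ) := by rw [Real.norm_eq_abs, abs_of_neg hv]
        have : (β - α) * (-(v k : ℝ)) ≤ v k * φ (x k) - v k * ψ (x k) := by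
          nlinarith [mul_le_mul_of_nonpos_left (by linarith : φ (x k) - ψ (x k) ≤ α - β) hv.le]
        rw [hn]
        simpa [hd] using this
    -- tail bound
    have htail : |∑' k, d (k + n)| ≤ 2 * M' * (∑' k, ‖v (k + n)‖) := by
      have hb2 : ∀ k, ‖d (k + n)‖ ≤ 2 * M' * ‖v (k + n)‖ := by
        intro k
        rw [hd]
        simp only
        have e1 : |φ (x (k+n))| ≤ M' := by
          calc |φ (x (k+n))| ≤ ‖φ‖ * ‖x (k+n)‖ := by
                have := φ.le_opNorm (x (k+n)); simpa [Real.norm_eq_abs] using this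
            _ ≤ 1 * M' := mul_le_mul hφn (hb _) (norm_nonneg _) zero_le_one
            _ = M' := one_mul _
        have e2 : |ψ (x (k+n))| ≤ M' := by
          calc |ψ (x (k+n))| ≤ ‖ψ‖ * ‖x (k+n)‖ := by
                have := ψ.le_opNorm (x (k+n)); simpa [Real.norm_eq_abs] using this
            _ ≤ 1 * M' := mul_le_mul hψn (hb _) (norm_nonneg _) zero_le_one
            _ = M' := one_mul _
        rw [Real.norm_eq_abs, Real.norm_eq_abs]
        calc |v (k+n) * φ (x (k+n)) - v (k+n) * ψ (x (k+n))|
            = |v (k+n)| * |φ (x (k+n)) - ψ (x (k+n))| := by rw [← abs_mul]; ring_nf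
          _ ≤ |v (k+n)| * (2 * M') := by
              apply mul_le_mul_of_nonneg_left _ (abs_nonneg _)
              calc |φ (x (k+n)) - ψ (x (k+n))| ≤ |φ (x (k+n))| + |ψ (x (k+n))| := abs_sub _ _
                _ ≤ 2 * M' := by linarith
          _ = 2 * M' * |v (k+n)| := by ring
      have hsumtail : Summable (fun k => ‖v (k + n)‖) := ((hnorm1 v).summable).comp_injective
        (add_left_injective n)
      calc |∑' k, d (k + n)| ≤ ∑' k, ‖d (k + n)‖ := by
            rw [← Real.norm_eq_abs]
            exact norm_tsum_le_tsum_norm (by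
              refine Summable.of_nonneg_of_le (fun k => norm_nonneg _) hb2 ?_
              exact hsumtail.mul_left (2 * M'))
        _ ≤ ∑' k, 2 * M' * ‖v (k + n)‖ := by
            refine Summable.tsum_le_tsum hb2 ?_ (hsumtail.mul_left (2 * M'))
            refine Summable.of_nonneg_of_le (fun k => norm_nonneg _) hb2 ?_
            exact hsumtail.mul_left (2 * M')
        _ = 2 * M' * (∑' k, ‖v (k + n)‖) := by rw [tsum_mul_left]
    -- functional values bounded by norm
    have hφJv : |φ (J v)| ≤ ‖J v‖ := by
      calc |φ (J v)| ≤ ‖φ‖ * ‖J v‖ := by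
            have := φ.le_opNorm (J v); simpa [Real.norm_eq_abs] using this
        _ ≤ 1 * ‖J v‖ := mul_le_mul_of_nonneg_right hφn (norm_nonneg _)
        _ = ‖J v‖ := one_mul _
    have hψJv : |ψ (J v)| ≤ ‖J v‖ := by
      calc |ψ (J v)| ≤ ‖ψ‖ * ‖J v‖ := by
            have := ψ.le_opNorm (J v); simpa [Real.norm_eq_abs] using this
        _ ≤ 1 * ‖J v‖ := mul_le_mul_of_nonneg_right hψn (norm_nonneg _)
        _ = ‖J v‖ := one_mul _
    have habs := abs_sub (φ (J v)) (ψ (J v))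
    have h5 : (∑ k ∈ Finset.range n, d k) = (φ (J v) - ψ (J v)) - ∑' k, d (k + n) := by
      linarith [hsplit]
    calc (β - α) * (∑ k ∈ Finset.range n, ‖v k‖) ≤ ∑ k ∈ Finset.range n, d k := hfin
      _ = (φ (J v) - ψ (J v)) - ∑' k, d (k + n) := h5
      _ ≤ |φ (J v)| + |ψ (J v)| + |∑' k, d (k + n)| := by
          have := abs_sub_abs_le_abs_sub (φ (J v)) (ψ (J v))
          have h6 : φ (J v) - ψ (J v) ≤ |φ (J v)| + |ψ (J v)| := by
            calc φ (J v) - ψ (J v) ≤ |φ (J v) - ψ (J v)| := le_abs_self _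
              _ ≤ |φ (J v)| + |ψ (J v)| := abs_sub _ _
          have h7 : -(∑' k, d (k + n)) ≤ |∑' k, d (k + n)| := neg_le_abs _
          linarith
      _ ≤ 2 * ‖J v‖ + 2 * M' * (∑' k, ‖v (k + n)‖) := by linarith
  -- take the limit n → ∞
  have hlim1 : Tendsto (fun n => (β - α) * (∑ k ∈ Finset.range n, ‖v k‖)) atTop
      (𝓝 ((β - α) * ‖v‖)) := by
    exact ((hnorm1 v).tendsto_sum_nat).const_mul _
  have hlim2 : Tendsto (fun n => 2 * ‖J v‖ + 2 * M' * (∑' k, ‖v (k + n)‖)) atTop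
      (𝓝 (2 * ‖J v‖ + 2 * M' * 0)) := by
    apply Tendsto.const_add
    apply Tendsto.const_mul
    exact tendsto_sum_nat_add (fun m => ‖v m‖)
  have hle : (β - α) * ‖v‖ ≤ 2 * ‖J v‖ + 2 * M' * 0 :=
    le_of_tendsto_of_tendsto' hlim1 hlim2 key
  rw [mul_zero, add_zero] at hle
  calc (β - α) / 2 * ‖v‖ = ((β - α) * ‖v‖) / 2 := by ring
    _ ≤ (2 * ‖J v‖) / 2 := by linarith
    _ = ‖J v‖ := by ring
/-- Measurability of a uniformly bounded countable supremum of measurable real functions. -/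
lemma measurable_iSup_of_bdd {δ : Type*} [MeasurableSpace δ] (u : ℕ → δ → ℝ)
    (hm : ∀ k, Measurable (u k)) (R : ℝ) (hb : ∀ k ω, |u k ω| ≤ R) :
    Measurable (fun ω => ⨆ k, u k ω) := by
  classical
  let q : ℕ → δ → ℝ := fun m => Nat.rec (u 0) (fun m qm => fun ω => max (qm ω) (u (m+1) ω)) m
  have hq_succ : ∀ m, q (m+1) = fun ω => max (q m ω) (u (m+1) ω) := fun m => rfl
  have hqm : ∀ m, Measurable (q m) := by
    intro m
    induction m with
    | zero => exact hm 0
    | succ m ih => rw [hq_succ]; exact Measurable.max ih (hm (m+1))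
  have hub : ∀ ω, BddAbove (Set.range fun k => u k ω) := by
    intro ω
    refine ⟨R, ?_⟩
    rintro r ⟨k, rfl⟩
    exact le_trans (le_abs_self _) (hb k ω)
  have hq_le : ∀ m ω, q m ω ≤ ⨆ k, u k ω := by
    intro m
    induction m with
    | zero => intro ω; exact le_ciSup (hub ω) 0
    | succ m ih =>
      intro ω
      rw [hq_succ]
      exact max_le (ih ω) (le_ciSup (hub ω) (m+1))
  have hu_le_q : ∀ m ω, u m ω ≤ q m ω := by
    intro m
    induction m with
    | zero => intro ω; exact le_rfl
    | succ m ih => intro ω; rw [hq_succ]; exact le_max_right _ _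
  have hmono : ∀ ω, Monotone (fun m => q m ω) := by
    intro ω
    apply monotone_nat_of_le_succ
    intro m
    rw [hq_succ]
    exact le_max_left _ _
  have htend : ∀ ω, Filter.Tendsto (fun m => q m ω) Filter.atTop (nhds (⨆ k, u k ω)) := by
    intro ω
    have hbq : BddAbove (Set.range fun m => q m ω) := by
      refine ⟨⨆ k, u k ω, ?_⟩
      rintro r ⟨m, rfl⟩
      exact hq_le m ω
    have h1 := tendsto_atTop_ciSup (hmono ω) hbq
    have h2 : (⨆ m, q m ω) = ⨆ k, u k ω := by
      apply le_antisymm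
      · exact ciSup_le fun m => hq_le m ω
      · exact ciSup_le fun k => le_trans (hu_le_q k ω) (le_ciSup hbq k)
    rwa [h2] at h1
  exact measurable_of_tendsto_metrizable hqm (tendsto_pi_nhds.2 htend)

set_option maxHeartbeats 2000000 in
/-- The key (Haydon-type) lemma: if `X` contains no copy of `ℓ¹`, then every element of `X**`
is universally measurable on the dual ball. -/
lemma core_aemeasurable {X : Type*} [NormedAddCommGroup X] [NormedSpace ℝ X] [CompleteSpace X]
    (hX : ContainsNoL1 X)
    (μ : Measure (DualBall X)) (hprob : IsProbabilityMeasure μ) (hreg : μ.Regular)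
    (F : StrongDual ℝ (StrongDual ℝ X)) :
    AEMeasurable (fun φ : DualBall X => F (WeakDual.toStrongDual φ.1)) μ := by
  classical
  haveI := hprob
  haveI : μ.Regular := hreg
  by_contra hg
  set g : DualBall X → ℝ := fun φ => F (WeakDual.toStrongDual φ.1) with hgdef
  have hgbd : ∀ φ : DualBall X, |g φ| ≤ ‖F‖ := by
    intro φ
    have h1 := F.le_opNorm (WeakDual.toStrongDual φ.1)
    have h2 : ‖WeakDual.toStrongDual φ.1‖ ≤ 1 := φ.2
    calc |g φ| = ‖F (WeakDual.toStrongDual φ.1)‖ := (Real.norm_eq_abs _).symm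
      _ ≤ ‖F‖ * ‖WeakDual.toStrongDual φ.1‖ := h1
      _ ≤ ‖F‖ * 1 := by nlinarith [norm_nonneg F]
      _ = ‖F‖ := mul_one _
  -- Step 1: find a pair of rationals that cannot be separated by a measurable set
  have key : ∃ qa qb : ℚ, (qa:ℝ) < (qb:ℝ) ∧ ∀ S : Set (DualBall X), MeasurableSet S →
      μ ({φ | g φ < (qa:ℝ)} \ S) ≠ 0 ∨ μ ({φ | (qb:ℝ) < g φ} ∩ S) ≠ 0 := by
    by_contra hk
    push_neg at hk
    apply hg
    obtain ⟨Q, hQ⟩ := exists_rat_gt ‖F‖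
    have hgQ : ∀ φ, g φ < (Q:ℝ) := fun φ => lt_of_le_of_lt (le_abs_self _) (lt_of_le_of_lt (hgbd φ) hQ)
    have hgQ' : ∀ φ, -(Q:ℝ) < g φ := by
      intro φ
      have := neg_abs_le (g φ)
      have h2 : -(Q:ℝ) < -|g φ| := by
        have := lt_of_le_of_lt (hgbd φ) hQ
        linarith
      linarith
    -- choose separating sets
    have hk' : ∀ p : ℚ × ℚ, ∃ S : Set (DualBall X), MeasurableSet S ∧
        ((p.1:ℝ) < (p.2:ℝ) → μ ({φ | g φ < (p.1:ℝ)} \ S) = 0 ∧ μ ({φ | (p.2:ℝ) < g φ} ∩ S) = 0) := by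
      intro p
      by_cases h : (p.1:ℝ) < (p.2:ℝ)
      · obtain ⟨S, h1, h2, h3⟩ := hk p.1 p.2 h
        exact ⟨S, h1, fun _ => ⟨h2, h3⟩⟩
      · exact ⟨∅, MeasurableSet.empty, fun h' => absurd h' h⟩
    choose S hSm hSsep using hk'
    -- the exceptional null set
    set N : Set (DualBall X) := ⋃ (p : ℚ × ℚ), ⋃ (_ : (p.1:ℝ) < (p.2:ℝ)),
        (({φ | g φ < (p.1:ℝ)} \ S p) ∪ ({φ | (p.2:ℝ) < g φ} ∩ S p)) with hN
    have hNnull : μ N = 0 := by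
      apply measure_iUnion_null
      intro p
      apply measure_iUnion_null
      intro hp
      exact measure_union_null (hSsep p hp).1 (hSsep p hp).2
    set N' : Set (DualBall X) := toMeasurable μ N with hN'
    have hN'null : μ N' = 0 := by rw [hN', measure_toMeasurable]; exact hNnull
    -- the approximating measurable family
    set w : ℚ → Set (DualBall X) := fun b => if b = Q then Set.univ else
        (if -Q < b ∧ b < Q then ⋃ (a : ℚ), ⋃ (_ : a < b), S (a, b) else ∅) with hw
    have hwm : ∀ b, MeasurableSet (w b) := by
      intro b
      simp only [hw]
      split_ifs
      · exact MeasurableSet.univ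
      · exact MeasurableSet.iUnion fun a => MeasurableSet.iUnion fun _ => hSm _
      · exact MeasurableSet.empty
    -- the measurable modification
    set G : DualBall X → ℝ := fun φ => sInf ((fun q : ℚ => (q:ℝ)) '' {b : ℚ | φ ∈ w b}) with hG
    have hmemQ : ∀ φ, (Q:ℝ) ∈ (fun q : ℚ => (q:ℝ)) '' {b : ℚ | φ ∈ w b} := by
      intro φ
      exact ⟨Q, by simp [hw], rfl⟩
    have hne : ∀ φ, ((fun q : ℚ => (q:ℝ)) '' {b : ℚ | φ ∈ w b}).Nonempty :=
      fun φ => ⟨(Q:ℝ), hmemQ φ⟩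
    have hbdd : ∀ φ, BddBelow ((fun q : ℚ => (q:ℝ)) '' {b : ℚ | φ ∈ w b}) := by
      intro φ
      refine ⟨-(Q:ℝ), ?_⟩
      rintro r ⟨b, hb, rfl⟩
      simp only [Set.mem_setOf_eq, hw] at hb
      split_ifs at hb with h1 h2
      · rw [h1]
        have h3 : (0:ℝ) ≤ (Q:ℝ) := le_of_lt (lt_of_le_of_lt (norm_nonneg F) hQ)
        push_cast
        linarith
      · have h4 : (-Q : ℚ) < b := h2.1
        have h5 : (-(Q:ℝ)) < (b:ℝ) := by exact_mod_cast h4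
        exact h5.le
      · exact absurd hb (Set.notMem_empty _)
    have hGmeas : Measurable G := by
      apply measurable_of_Iio
      intro t
      have hset : G ⁻¹' (Set.Iio t) = ⋃ (b : ℚ), ⋃ (_ : (b:ℝ) < t), w b := by
        ext φ
        simp only [Set.mem_preimage, Set.mem_Iio, Set.mem_iUnion]
        constructor
        · intro h
          obtain ⟨r, ⟨b, hb, rfl⟩, hrt⟩ := (csInf_lt_iff (hbdd φ) (hne φ)).1 h
          exact ⟨b, hrt, hb⟩
        · rintro ⟨b, hbt, hb⟩
          exact lt_of_le_of_lt (csInf_le (hbdd φ) ⟨b, hb, rfl⟩) hbt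
      rw [hset]
      exact MeasurableSet.iUnion fun b => MeasurableSet.iUnion fun _ => hwm b
    refine ⟨G, hGmeas, ?_⟩
    -- a.e. equality
    have hsubeq : ∀ φ, φ ∉ N' → g φ = G φ := by
      intro φ hφ
      have hφN : φ ∉ N := fun h => hφ (subset_toMeasurable μ N h)
      have hup : ∀ b : ℚ, φ ∈ w b → g φ ≤ (b:ℝ) := by
        intro b hb
        simp only [hw] at hb
        split_ifs at hb with h1 h2
        · subst h1
          exact (hgQ φ).le
        · obtain ⟨a, ha, hmem⟩ := Set.mem_iUnion₂.1 hb
          by_contra hlt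
          push_neg at hlt
          apply hφN
          rw [hN]
          apply Set.mem_iUnion.2
          refine ⟨(a, b), ?_⟩
          apply Set.mem_iUnion.2
          have hab : ((a, b).1 : ℝ) < ((a, b).2 : ℝ) := by exact_mod_cast ha
          refine ⟨hab, ?_⟩
          exact Set.mem_union_right _ ⟨hlt, hmem⟩
        · exact absurd hb (Set.notMem_empty _)
      have hdown : ∀ b : ℚ, g φ < (b:ℝ) → (b:ℝ) < (Q:ℝ) → φ ∈ w b := by
        intro b h1 h2
        have hb1 : (-Q : ℚ) < b := by
          have := hgQ' φ
          have : -(Q:ℝ) < (b:ℝ) := lt_trans this h1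
          exact_mod_cast this
        have hb2 : b < Q := by exact_mod_cast h2
        obtain ⟨a, ha1, ha2⟩ := exists_rat_btwn h1
        have haS : φ ∈ S (a, b) := by
          by_contra hmem
          apply hφN
          rw [hN]
          apply Set.mem_iUnion.2
          refine ⟨(a, b), ?_⟩
          apply Set.mem_iUnion.2
          have hab : ((a, b).1 : ℝ) < ((a, b).2 : ℝ) := by
            simp only
            exact_mod_cast ha2
          refine ⟨hab, ?_⟩
          exact Set.mem_union_left _ ⟨ha1, hmem⟩
        simp only [hw]
        rw [if_neg hb2.ne, if_pos ⟨hb1, hb2⟩]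
        apply Set.mem_iUnion₂.2
        refine ⟨a, ?_, haS⟩
        exact_mod_cast ha2
      apply le_antisymm
      · apply le_csInf (hne φ)
        rintro r ⟨b, hb, rfl⟩
        exact hup b hb
      · by_contra hcon
        push_neg at hcon
        obtain ⟨b, hb1, hb2⟩ := exists_rat_btwn (lt_min hcon (hgQ φ))
        have hwb : φ ∈ w b := hdown b hb1 (lt_of_lt_of_le hb2 (min_le_right _ _))
        have hGb : G φ ≤ (b:ℝ) := csInf_le (hbdd φ) ⟨b, hwb, rfl⟩
        have := lt_of_lt_of_le hb2 (min_le_left _ _)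
        linarith
    have hsub2 : {φ | ¬ g φ = G φ} ⊆ N' := by
      intro φ h
      by_contra h'
      exact h (hsubeq φ h')
    exact measure_mono_null hsub2 hN'null
  -- Step 2: extract the non-separated pair and build an ℓ¹-embedding
  obtain ⟨qa, qb, hab, hnosep⟩ := key
  set α : ℝ := (qa:ℝ) with hα
  set β : ℝ := (qb:ℝ) with hβ
  set A : Set (DualBall X) := {φ | g φ < α} with hA
  set B : Set (DualBall X) := {φ | β < g φ} with hB
  set A' : Set (DualBall X) := toMeasurable μ A with hA'
  set B' : Set (DualBall X) := toMeasurable μ B with hB'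
  set E : Set (DualBall X) := A' ∩ B' with hE
  have hEm : MeasurableSet E :=
    (measurableSet_toMeasurable _ _).inter (measurableSet_toMeasurable _ _)
  have hEne : μ E ≠ 0 := by
    intro h0
    rcases hnosep A' (measurableSet_toMeasurable μ A) with h | h
    · apply h
      have : A \ A' = ∅ := Set.diff_eq_empty.2 (subset_toMeasurable μ A)
      rw [this, measure_empty]
    · apply h
      have h1 : μ (B' ∩ A') = μ (B ∩ A') :=
        Measure.measure_toMeasurable_inter_of_sFinite (measurableSet_toMeasurable μ A) B
      have h2 : B' ∩ A' = E := Set.inter_comm _ _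
      rw [← h1, h2, h0]
  have hfullA : ∀ S : Set (DualBall X), MeasurableSet S → S ⊆ E → μ (A ∩ S) = μ S := by
    intro S hSm hSE
    have h1 : μ (A' ∩ S) = μ (A ∩ S) := Measure.measure_toMeasurable_inter_of_sFinite hSm A
    have h2 : A' ∩ S = S := Set.inter_eq_self_of_subset_right
      (hSE.trans (Set.inter_subset_left))
    rw [← h1, h2]
  have hfullB : ∀ S : Set (DualBall X), MeasurableSet S → S ⊆ E → μ (B ∩ S) = μ S := by
    intro S hSm hSE
    have h1 : μ (B' ∩ S) = μ (B ∩ S) := Measure.measure_toMeasurable_inter_of_sFinite hSm B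
    have h2 : B' ∩ S = S := Set.inter_eq_self_of_subset_right
      (hSE.trans (Set.inter_subset_right))
    rw [← h1, h2]
  -- essential support picking lemma
  have hpick : ∀ C : Set (DualBall X), MeasurableSet C → C ⊆ E → μ C ≠ 0 →
      ∃ a b : DualBall X, a ∈ A ∧ b ∈ B ∧
        (∀ U : Set (DualBall X), IsOpen U → a ∈ U → μ (C ∩ U) ≠ 0) ∧
        (∀ U : Set (DualBall X), IsOpen U → b ∈ U → μ (C ∩ U) ≠ 0) := by
    intro C hCm hCE hC0
    set NC : Set (DualBall X) := ⋃₀ {U | IsOpen U ∧ μ (C ∩ U) = 0} with hNCdef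
    have hNCopen : IsOpen NC := isOpen_sUnion (fun U hU => hU.1)
    have hNCnull : μ (C ∩ NC) = 0 := by
      by_contra h0
      obtain ⟨K, hKsub, hKcomp, hKpos⟩ :=
        MeasurableSet.exists_lt_isCompact_of_ne_top (hCm.inter hNCopen.measurableSet)
          (measure_ne_top μ _) (pos_iff_ne_zero.2 h0)
      have hcover : K ⊆ ⋃ U : {U : Set (DualBall X) // IsOpen U ∧ μ (C ∩ U) = 0}, U.1 := by
        intro k hk
        obtain ⟨U, hU, hkU⟩ := (hKsub hk).2
        exact Set.mem_iUnion.2 ⟨⟨U, hU⟩, hkU⟩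
      obtain ⟨t, ht⟩ := hKcomp.elim_finite_subcover
        (fun U : {U : Set (DualBall X) // IsOpen U ∧ μ (C ∩ U) = 0} => U.1)
        (fun U => U.2.1) hcover
      have hKle : μ K ≤ ∑ U ∈ t, μ (C ∩ U.1) := by
        calc μ K ≤ μ (⋃ U ∈ t, (C ∩ U.1)) := by
              apply measure_mono
              intro k hk
              obtain ⟨U, hUt, hkU⟩ := Set.mem_iUnion₂.1 (ht hk)
              exact Set.mem_biUnion hUt ⟨(hKsub hk).1, hkU⟩
          _ ≤ ∑ U ∈ t, μ (C ∩ U.1) := measure_biUnion_finset_le t _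
      have hzero : ∑ U ∈ t, μ (C ∩ U.1) = 0 := by
        apply Finset.sum_eq_zero
        intro U _
        exact U.2.2
      rw [hzero] at hKle
      exact absurd (le_antisymm hKle zero_le) (by simpa using hKpos.ne')
    have hrem : μ (C \ NC) = μ C := by
      have hCeq : C \ NC = C \ (C ∩ NC) := by
        ext ω; simp only [Set.mem_diff, Set.mem_inter_iff]; tauto
      rw [hCeq, measure_diff_null hNCnull]
    have hCNm : MeasurableSet (C \ NC) := hCm.diff hNCopen.measurableSet
    have hCNE : C \ NC ⊆ E := (Set.diff_subset).trans hCE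
    have haA : (A ∩ (C \ NC)).Nonempty := by
      apply nonempty_of_measure_ne_zero (μ := μ)
      rw [hfullA _ hCNm hCNE, hrem]
      exact hC0
    have hbB : (B ∩ (C \ NC)).Nonempty := by
      apply nonempty_of_measure_ne_zero (μ := μ)
      rw [hfullB _ hCNm hCNE, hrem]
      exact hC0
    obtain ⟨a, haA', haC⟩ := haA
    obtain ⟨b, hbB', hbC⟩ := hbB
    refine ⟨a, b, haA', hbB', ?_, ?_⟩
    · intro U hU haU h0
      exact haC.2 (Set.mem_sUnion.2 ⟨U, ⟨hU, h0⟩, haU⟩)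
    · intro U hU hbU h0
      exact hbC.2 (Set.mem_sUnion.2 ⟨U, ⟨hU, h0⟩, hbU⟩)
  -- evaluation maps are continuous on the ball
  have hev : ∀ x : X, Continuous (fun φ : DualBall X => (φ.1 : WeakDual ℝ X) x) :=
    fun x => (WeakDual.eval_continuous x).comp continuous_subtype_val
  -- the "half-space" sets
  set D : X → Bool → Set (DualBall X) := fun x b =>
    if b then {φ : DualBall X | β < (φ.1 : WeakDual ℝ X) x}
    else {φ : DualBall X | (φ.1 : WeakDual ℝ X) x < α} with hD
  have hDopen : ∀ x b, IsOpen (D x b) := by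
    intro x b
    rw [hD]
    cases b
    · simpa [Set.preimage] using (isOpen_Iio (a := α)).preimage (hev x)
    · simpa [Set.preimage] using (isOpen_Ioi (a := β)).preimage (hev x)
  let Cell : ∀ {n : ℕ}, (Fin n → X) → (Fin n → Bool) → Set (DualBall X) :=
    fun {n} xs s => E ∩ ⋂ i, D (xs i) (s i)
  have hCell : ∀ {n : ℕ} (xs : Fin n → X) (s : Fin n → Bool),
      Cell xs s = E ∩ ⋂ i, D (xs i) (s i) := fun xs s => rfl
  have hCellm : ∀ {n} (xs : Fin n → X) (s : Fin n → Bool), MeasurableSet (Cell xs s) :=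
    fun xs s => hEm.inter (MeasurableSet.iInter fun i => (hDopen _ _).measurableSet)
  have hCellE : ∀ {n} (xs : Fin n → X) (s : Fin n → Bool), Cell xs s ⊆ E :=
    fun xs s => Set.inter_subset_left
  -- cell membership fact for F-values
  have hgA : ∀ φ ∈ A, g φ < α := fun φ h => h
  have hgB : ∀ φ ∈ B, β < g φ := fun φ h => h
  -- step lemma
  have hstep : ∀ n (xs : Fin n → X), (∀ s : Fin n → Bool, μ (Cell xs s) ≠ 0) →
      ∃ x : X, ‖x‖ ≤ ‖F‖ + 1 ∧ ∀ s : Fin (n+1) → Bool, μ (Cell (Fin.snoc xs x) s) ≠ 0 := by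
    intro n xs hcells
    -- pick witnesses in each cell
    have hchoice : ∀ s : Fin n → Bool, ∃ a b : DualBall X, a ∈ A ∧ b ∈ B ∧
        (∀ U : Set (DualBall X), IsOpen U → a ∈ U → μ (Cell xs s ∩ U) ≠ 0) ∧
        (∀ U : Set (DualBall X), IsOpen U → b ∈ U → μ (Cell xs s ∩ U) ≠ 0) :=
      fun s => hpick (Cell xs s) (hCellm xs s) (hCellE xs s) (hcells s)
    choose av bv havA hbvB hava hbvb using hchoice
    -- the approximation accuracy
    have hεpos : ∀ s : Fin n → Bool, 0 < min (α - g (av s)) (g (bv s) - β) := by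
      intro s
      apply lt_min
      · have := havA s; simp only [hA, Set.mem_setOf_eq] at this; linarith
      · have := hbvB s; simp only [hB, Set.mem_setOf_eq] at this; linarith
    set ε : ℝ := (Finset.univ.inf' (Finset.univ_nonempty (α := Fin n → Bool))
      (fun s => min (α - g (av s)) (g (bv s) - β))) with hε
    have hεpos' : 0 < ε := by
      rw [hε]
      apply Finset.lt_inf'_iff _ |>.2
      intro s _
      exact hεpos s
    -- get an approximating element of X
    obtain ⟨x, hxn, hxapp⟩ := exists_approx_aux F (lt_add_one ‖F‖)
      (fun p : (Fin n → Bool) × Bool =>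
        if p.2 then WeakDual.toStrongDual (bv p.1).1 else WeakDual.toStrongDual (av p.1).1)
      hεpos'
    have hεle : ∀ s : Fin n → Bool, ε ≤ min (α - g (av s)) (g (bv s) - β) := by
      intro s
      rw [hε]
      exact Finset.inf'_le _ (Finset.mem_univ s)
    have haD : ∀ s : Fin n → Bool, av s ∈ D x false := by
      intro s
      have h1 := hxapp (s, false)
      simp only [if_neg (Bool.false_ne_true)] at h1
      have h2 : |WeakDual.toStrongDual (av s).1 x - g (av s)| < ε := h1
      have h3 : ε ≤ α - g (av s) := (hεle s).trans (min_le_left _ _)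
      have h4 : WeakDual.toStrongDual (av s).1 x < α := by
        have := abs_lt.1 h2
        linarith [this.2]
      simp only [hD, if_neg (Bool.false_ne_true), Set.mem_setOf_eq]
      exact h4
    have hbD : ∀ s : Fin n → Bool, bv s ∈ D x true := by
      intro s
      have h1 := hxapp (s, true)
      simp only [if_pos rfl] at h1
      have h2 : |WeakDual.toStrongDual (bv s).1 x - g (bv s)| < ε := h1
      have h3 : ε ≤ g (bv s) - β := (hεle s).trans (min_le_right _ _)
      have h4 : β < WeakDual.toStrongDual (bv s).1 x := by
        have := abs_lt.1 h2
        linarith [this.1]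
      simp only [hD, if_pos rfl, Set.mem_setOf_eq]
      exact h4
    refine ⟨x, hxn, ?_⟩
    intro s
    -- decompose the new cell
    have hcelldec : Cell (Fin.snoc xs x) s =
        Cell xs (fun i => s i.castSucc) ∩ D x (s (Fin.last n)) := by
      simp only [hCell]
      ext φ
      simp only [Set.mem_inter_iff, Set.mem_iInter]
      constructor
      · rintro ⟨hφE, hφD⟩
        refine ⟨⟨hφE, fun i => ?_⟩, ?_⟩
        · have := hφD i.castSucc
          rwa [Fin.snoc_castSucc] at this
        · have := hφD (Fin.last n)
          rwa [Fin.snoc_last] at this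
      · rintro ⟨⟨hφE, hφD⟩, hφlast⟩
        refine ⟨hφE, fun i => ?_⟩
        refine Fin.lastCases ?_ ?_ i
        · rwa [Fin.snoc_last]
        · intro j
          rw [Fin.snoc_castSucc]
          exact hφD j
    rw [hcelldec]
    cases hl : s (Fin.last n)
    · exact hava (fun i => s i.castSucc) (D x false) (hDopen x false)
        (haD (fun i => s i.castSucc))
    · exact hbvb (fun i => s i.castSucc) (D x true) (hDopen x true)
        (hbD (fun i => s i.castSucc))
  -- construct the sequence
  obtain ⟨x, hxQ, hxP⟩ := exists_seq_of_step (fun x : X => ‖x‖ ≤ ‖F‖ + 1)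
    (fun n v => ∀ s : Fin n → Bool, μ (Cell v s) ≠ 0)
    (by
      intro s
      have : Cell (fun i : Fin 0 => i.elim0) s = E := by
        rw [hCell]
        simp [Set.iInter_of_empty]
      rw [this]
      exact hEne)
    hstep
  -- cells are nonempty, giving the independence witnesses
  have hcellne : ∀ n (s : Fin n → Bool), ∃ φ : X →L[ℝ] ℝ, ‖φ‖ ≤ 1 ∧ ∀ i : Fin n,
      (s i = true → β < φ (x i)) ∧ (s i = false → φ (x i) < α) := by
    intro n s
    obtain ⟨φ, hφ⟩ := nonempty_of_measure_ne_zero (hxP n s)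
    rw [hCell] at hφ
    obtain ⟨hφE, hφD⟩ := hφ
    refine ⟨WeakDual.toStrongDual φ.1, φ.2, fun i => ?_⟩
    have hφi := Set.mem_iInter.1 hφD i
    constructor
    · intro hsi
      rw [hD] at hφi
      rw [hsi] at hφi
      simpa using hφi
    · intro hsi
      rw [hD] at hφi
      rw [hsi] at hφi
      simpa using hφi
  obtain ⟨J, c, hc, hlow⟩ := exists_l1_embedding x (‖F‖ + 1) hxQ
    (show α < β by exact_mod_cast hab) hcellne
  exact hX ⟨J, c, hc, hlow⟩

end Helpers

/-- If `X` contains no subspace isomorphic to `ℓ_1`, then every operator `T : X* → Y`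
with separable range belongs to `UM(X*,Y)`. -/
theorem memUM_of_separable_range
    [CompleteSpace X] [CompleteSpace Y]
    (hX : ContainsNoL1 X)
    (T : StrongDual ℝ X →L[ℝ] Y)
    (hT : TopologicalSpace.IsSeparable (Set.range T)) :
    MemUM T := by
  classical
  intro μ hprob hreg
  borelize Y
  -- countable dense data
  obtain ⟨c, hcc, hcsub⟩ := hT
  set c₀ : Set Y := insert 0 c with hc₀
  have hc₀c : c₀.Countable := hcc.insert 0
  have hc₀ne : c₀.Nonempty := ⟨0, Set.mem_insert _ _⟩
  obtain ⟨e, he⟩ := hc₀c.exists_eq_range hc₀ne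
  set c₂ : Set Y := Set.image2 (fun a b => a - b) c₀ c₀ with hc₂
  have hc₂c : c₂.Countable := Set.Countable.image2 hc₀c hc₀c _
  have hc₂ne : c₂.Nonempty :=
    ⟨0 - 0, Set.mem_image2_of_mem (Set.mem_insert _ _) (Set.mem_insert _ _)⟩
  obtain ⟨d, hd⟩ := hc₂c.exists_eq_range hc₂ne
  -- norming functionals
  have hdual : ∀ k : ℕ, ∃ yk : StrongDual ℝ Y, ‖yk‖ ≤ 1 ∧ yk (d k) = ‖d k‖ :=
    fun k => exists_dual_vector'' ℝ (d k)
  choose yk hyk1 hyk2 using hdual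
  have hykb : ∀ (k : ℕ) (z : Y), |yk k z| ≤ ‖z‖ := by
    intro k z
    calc |yk k z| = ‖yk k z‖ := (Real.norm_eq_abs _).symm
      _ ≤ ‖yk k‖ * ‖z‖ := (yk k).le_opNorm z
      _ ≤ 1 * ‖z‖ := mul_le_mul_of_nonneg_right (hyk1 k) (norm_nonneg z)
      _ = ‖z‖ := one_mul _
  -- the norming property on the closure of the range of d
  have hnorm : ∀ w ∈ closure (Set.range d), ‖w‖ = ⨆ k, yk k w := by
    intro w hw
    have hbdd : BddAbove (Set.range fun k => yk k w) := by
      refine ⟨‖w‖, ?_⟩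
      rintro r ⟨k, rfl⟩
      exact le_trans (le_abs_self _) (hykb k w)
    apply le_antisymm
    · apply le_of_forall_pos_le_add
      intro ε hε
      obtain ⟨k, hk⟩ := Metric.mem_closure_range_iff.1 hw (ε/2) (by linarith)
      have h1 : ‖w - d k‖ < ε/2 := by
        rw [← dist_eq_norm]
        exact hk
      have h2 : ‖w‖ ≤ ‖d k‖ + ε/2 := by
        have h3 := norm_sub_norm_le w (d k)
        linarith
      have h4 : yk k (d k) ≤ yk k w + ε/2 := by
        have h5 : yk k (d k) - yk k w = yk k (d k - w) := by rw [map_sub]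
        have h6 : |yk k (d k - w)| ≤ ‖d k - w‖ := hykb k _
        have h7 : ‖d k - w‖ = ‖w - d k‖ := norm_sub_rev _ _
        have := le_trans (le_abs_self _) h6
        rw [h7] at this
        linarith [h5 ▸ this, h1]
      have h8 : yk k w ≤ ⨆ k, yk k w := le_ciSup hbdd k
      have h9 : ‖d k‖ = yk k (d k) := (hyk2 k).symm
      linarith
    · exact ciSup_le fun k => le_trans (le_abs_self _) (hykb k w)
  -- values of T on the ball lie in the closure of c₀
  have hTval : ∀ φ : DualBall X, T (WeakDual.toStrongDual φ.1) ∈ closure c₀ := by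
    intro φ
    have h1 : T (WeakDual.toStrongDual φ.1) ∈ Set.range T := Set.mem_range_self _
    exact closure_mono (Set.subset_insert 0 c) (hcsub h1)
  have hTdiff : ∀ (φ : DualBall X) (j : ℕ),
      T (WeakDual.toStrongDual φ.1) - e j ∈ closure (Set.range d) := by
    intro φ j
    rw [← hd]
    have hej : e j ∈ c₀ := by rw [he]; exact Set.mem_range_self j
    have h1 : Continuous (fun z : Y => z - e j) := continuous_id.sub continuous_const
    have h2 : T (WeakDual.toStrongDual φ.1) - e j ∈ (fun z : Y => z - e j) '' closure c₀ :=
      ⟨_, hTval φ, rfl⟩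
    have h3 := image_closure_subset_closure_image h1 h2
    refine closure_mono ?_ h3
    rintro _ ⟨z, hz, rfl⟩
    exact Set.mem_image2_of_mem hz hej
  -- measurable versions of the coordinates
  have hcoord : ∀ k, AEMeasurable
      (fun φ : DualBall X => yk k (T (WeakDual.toStrongDual φ.1))) μ :=
    fun k => core_aemeasurable hX μ hprob hreg ((yk k).comp T)
  set u : ℕ → DualBall X → ℝ := fun k => (hcoord k).mk _ with hu
  have humeas : ∀ k, Measurable (u k) := fun k => (hcoord k).measurable_mk
  -- exceptional null set
  set N : Set (DualBall X) :=
    ⋃ k, {φ : DualBall X | yk k (T (WeakDual.toStrongDual φ.1)) ≠ u k φ} with hN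
  have hNnull : μ N = 0 := by
    apply measure_iUnion_null
    intro k
    have := (hcoord k).ae_eq_mk
    exact this
  set N' : Set (DualBall X) := toMeasurable μ N with hN'
  have hN'null : μ N' = 0 := by rw [hN', measure_toMeasurable]; exact hNnull
  have hgood : ∀ φ : DualBall X, φ ∉ N' → ∀ k,
      yk k (T (WeakDual.toStrongDual φ.1)) = u k φ := by
    intro φ hφ k
    by_contra hne
    exact hφ (subset_toMeasurable μ N (Set.mem_iUnion.2 ⟨k, hne⟩))
  -- norm bound on values of T
  set R : ℝ := ‖T‖ with hR
  have hTb : ∀ φ : DualBall X, ‖T (WeakDual.toStrongDual φ.1)‖ ≤ R := by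
    intro φ
    calc ‖T (WeakDual.toStrongDual φ.1)‖ ≤ ‖T‖ * ‖WeakDual.toStrongDual φ.1‖ := T.le_opNorm _
      _ ≤ ‖T‖ * 1 := mul_le_mul_of_nonneg_left φ.2 (norm_nonneg T)
      _ = R := mul_one _
  -- truncation
  set tr : ℝ → ℝ := fun z => max (min z R) (-R) with htr
  have htreq : ∀ z : ℝ, |z| ≤ R → tr z = z := by
    intro z hz
    rw [htr]
    have h1 := abs_le.1 hz
    simp only
    rw [min_eq_left h1.2, max_eq_left h1.1]
  have htrb : ∀ z : ℝ, |tr z| ≤ R := by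
    intro z
    have hR0 : 0 ≤ R := norm_nonneg T
    rw [htr, abs_le]
    constructor
    · simp only; exact le_max_right _ _
    · simp only
      apply max_le
      · exact le_trans (min_le_right _ _) le_rfl
      · linarith
  -- the distance functions
  set ρ : ℕ → DualBall X → ℝ := fun j φ => ⨆ k, (tr (u k φ) - yk k (e j)) with hρ
  have hρmeas : ∀ j, Measurable (ρ j) := by
    intro j
    have := measurable_iSup_of_bdd (fun k φ => tr (u k φ) - yk k (e j))
      (fun k => by
        apply Measurable.sub _ measurable_const
        apply Measurable.max _ measurable_const
        exact Measurable.min (humeas k) measurable_const)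
      (R + ‖e j‖)
      (fun k φ => by
        have h1 := htrb (u k φ)
        have h2 := hykb k (e j)
        calc |tr (u k φ) - yk k (e j)| ≤ |tr (u k φ)| + |yk k (e j)| := abs_sub _ _
          _ ≤ R + ‖e j‖ := add_le_add h1 h2)
    exact this
  have hρval : ∀ φ : DualBall X, φ ∉ N' → ∀ j,
      ρ j φ = ‖T (WeakDual.toStrongDual φ.1) - e j‖ := by
    intro φ hφ j
    have hw := hTdiff φ j
    have h0 : ∀ k, tr (u k φ) - yk k (e j) = yk k (T (WeakDual.toStrongDual φ.1) - e j) := by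
      intro k
      rw [← hgood φ hφ k]
      rw [htreq _ (le_trans (hykb k _) (hTb φ))]
      rw [map_sub]
    rw [hρ]
    simp only
    rw [hnorm _ hw]
    congr 1
    funext k
    rw [h0 k]
  -- the approximating sequence
  set f' : ℕ → DualBall X → Y := fun n φ =>
    if h : ∃ j, ρ j φ < 1/(n+1) then e (Nat.find h) else 0 with hf'
  have hf'meas : ∀ n, Measurable (f' n) := by
    intro n
    set idx : DualBall X → ℕ := fun φ =>
      if h : ∃ j, ρ j φ < 1/(n+1) then Nat.find h + 1 else 0 with hidx
    have hidxmeas : Measurable idx := by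
      apply measurable_to_countable'
      intro m
      rcases m with _ | m
      · have : idx ⁻¹' {0} = ⋂ j, {φ | ¬ (ρ j φ < 1/(n+1))} := by
          ext φ
          simp only [hidx, Set.mem_preimage, Set.mem_singleton_iff, Set.mem_iInter,
            Set.mem_setOf_eq]
          constructor
          · intro h j hj
            rw [dif_pos ⟨j, hj⟩] at h
            exact Nat.succ_ne_zero _ h
          · intro h
            rw [dif_neg (by rintro ⟨j, hj⟩; exact h j hj)]
        rw [this]
        exact MeasurableSet.iInter fun j =>
          ((measurableSet_lt (hρmeas j) measurable_const)).compl
      · have : idx ⁻¹' {m + 1} =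
            {φ | ρ m φ < 1/(n+1)} ∩ ⋂ i, ⋂ (_ : i < m), {φ | ¬ (ρ i φ < 1/(n+1))} := by
          ext φ
          simp only [hidx, Set.mem_preimage, Set.mem_singleton_iff, Set.mem_inter_iff,
            Set.mem_iInter, Set.mem_setOf_eq]
          constructor
          · intro h
            by_cases hex : ∃ j, ρ j φ < 1/(n+1)
            · rw [dif_pos hex] at h
              have hm : Nat.find hex = m := by omega
              have := Nat.find_eq_iff hex |>.1 hm
              exact ⟨this.1, fun i hi => this.2 i hi⟩
            · rw [dif_neg hex] at h
              exact absurd h.symm (Nat.succ_ne_zero m)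
          · rintro ⟨h1, h2⟩
            have hex : ∃ j, ρ j φ < 1/(n+1) := ⟨m, h1⟩
            rw [dif_pos hex]
            congr 1
            exact (Nat.find_eq_iff hex).2 ⟨h1, fun i hi => h2 i hi⟩
        rw [this]
        refine MeasurableSet.inter (measurableSet_lt (hρmeas m) measurable_const) ?_
        exact MeasurableSet.iInter fun i => MeasurableSet.iInter fun _ =>
          ((measurableSet_lt (hρmeas i) measurable_const)).compl
    have hcomp : f' n = (fun m : ℕ => if m = 0 then (0 : Y) else e (m - 1)) ∘ idx := by
      funext φ
      simp only [hf', hidx, Function.comp_apply]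
      by_cases hex : ∃ j, ρ j φ < 1/(n+1)
      · rw [dif_pos hex, dif_pos hex, if_neg (Nat.succ_ne_zero _)]
        simp
      · rw [dif_neg hex, dif_neg hex, if_pos rfl]
    rw [hcomp]
    exact (measurable_from_top).comp hidxmeas
  have hf'sm : ∀ n, StronglyMeasurable (f' n) := by
    intro n
    rw [stronglyMeasurable_iff_measurable_separable]
    refine ⟨hf'meas n, ?_⟩
    apply TopologicalSpace.IsSeparable.mono
      (Set.Countable.isSeparable ((Set.countable_range e).insert 0))
    · rintro y ⟨φ, rfl⟩
      simp only [hf']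
      by_cases hex : ∃ j, ρ j φ < 1/(n+1)
      · rw [dif_pos hex]
        exact Set.mem_insert_of_mem _ (Set.mem_range_self _)
      · rw [dif_neg hex]
        exact Set.mem_insert _ _
  -- a.e. convergence to evalBall T
  have hconv : ∀ φ : DualBall X, φ ∉ N' →
      Filter.Tendsto (fun n => f' n φ) Filter.atTop (nhds (evalBall T φ)) := by
    intro φ hφ
    have hδ : ∀ n : ℕ, (0:ℝ) < 1/(n+1) := by
      intro n
      apply div_pos one_pos
      positivity
    have hex : ∀ n : ℕ, ∃ j, ρ j φ < 1/(n+1) := by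
      intro n
      have h1 : T (WeakDual.toStrongDual φ.1) ∈ closure (Set.range e) := by
        rw [← he]
        exact hTval φ
      obtain ⟨j, hj⟩ := Metric.mem_closure_range_iff.1 h1 (1/(n+1)) (hδ n)
      refine ⟨j, ?_⟩
      rw [hρval φ hφ j, ← dist_eq_norm]
      exact hj
    have hdist : ∀ n : ℕ, dist (f' n φ) (evalBall T φ) < 1/(n+1) := by
      intro n
      have h1 := Nat.find_spec (hex n)
      simp only [hf']
      rw [dif_pos (hex n)]
      rw [hρval φ hφ _] at h1
      rw [dist_comm, dist_eq_norm]
      exact h1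
    rw [tendsto_iff_dist_tendsto_zero]
    apply squeeze_zero (fun n => dist_nonneg) (fun n => (hdist n).le)
    exact tendsto_one_div_add_atTop_nhds_zero_nat
  have hae : ∀ᵐ φ ∂μ, Filter.Tendsto (fun n => f' n φ) Filter.atTop (nhds (evalBall T φ)) := by
    rw [MeasureTheory.ae_iff]
    apply measure_mono_null _ hN'null
    intro φ hφ
    by_contra hφ'
    exact hφ (hconv φ hφ')
  exact aestronglyMeasurable_of_tendsto_ae Filter.atTop
    (fun n => (hf'sm n).aestronglyMeasurable) hae
end

section
/- Let X and Y be Banach spaces and suppose Y has the bounded approximation property. If T ∈ L(X*,Y) is (weak*-to-weak) continuous and has separable range, then T is affine Baire-1, i.e., there is a sequence (T_n) of finite rank (weak*-to-norm continuous) operators in X ε Y such that ‖T_n(x*) − T(x*)‖_Y → 0 for every x* ∈ X*. -/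
open MeasureTheory Filter Topology

variable {X Y Z : Type*} [NormedAddCommGroup X] [NormedSpace ℝ X]
  [NormedAddCommGroup Y] [NormedSpace ℝ Y] [NormedAddCommGroup Z] [NormedSpace ℝ Z]

/-- `Y` has the bounded approximation property: for some `λ ≥ 1`, every norm-compact set
can be `ε`-approximated by a finite rank operator of norm at most `λ`. -/
def HasBAP (Y : Type*) [NormedAddCommGroup Y] [NormedSpace ℝ Y] : Prop :=
  ∃ lam : ℝ, 1 ≤ lam ∧ ∀ (C : Set Y), IsCompact C → ∀ ε : ℝ, 0 < ε →
    ∃ R : Y →L[ℝ] Y, FiniteDimensional ℝ (LinearMap.range (R : Y →ₗ[ℝ] Y)) ∧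
      ‖R‖ ≤ lam ∧ ∀ y ∈ C, ‖R y - y‖ ≤ ε

private lemma finrank_weak_to_norm_cont (R : Y →L[ℝ] Y)
    (hR : FiniteDimensional ℝ (LinearMap.range (R : Y →ₗ[ℝ] Y))) :
    Continuous fun y : WeakSpace ℝ Y => R ((toWeakSpace ℝ Y).symm y) := by
  set F := LinearMap.range (R : Y →ₗ[ℝ] Y) with hF
  haveI : FiniteDimensional ℝ F := hR
  let b := Module.Basis.ofVectorSpace ℝ F
  haveI : Fintype (Module.Basis.ofVectorSpaceIndex ℝ F) := FiniteDimensional.fintypeBasisIndex b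
  let Rc : Y →L[ℝ] F := R.codRestrict F (fun y => LinearMap.mem_range_self _ y)
  let f : Module.Basis.ofVectorSpaceIndex ℝ F → (Y →L[ℝ] ℝ) := fun i =>
    (LinearMap.toContinuousLinearMap (b.coord i)).comp Rc
  have key : ∀ y : Y, R y = ∑ i, f i y • ((b i : F) : Y) := by
    intro y
    have h1 : (Rc y : Y) = R y := rfl
    have h2 : ∑ i, b.repr (Rc y) i • b i = Rc y := b.sum_repr (Rc y)
    calc R y = ((∑ i, b.repr (Rc y) i • b i : F) : Y) := by rw [h2]; exact h1.symm
    _ = ∑ i, f i y • ((b i : F) : Y) := by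
        push_cast
        rfl
  have : Continuous fun y : WeakSpace ℝ Y =>
      ∑ i, f i ((toWeakSpace ℝ Y).symm y) • ((b i : F) : Y) := by
    apply continuous_finset_sum
    intro i _
    exact ((WeakBilin.eval_continuous ((topDualPairing ℝ Y).flip) (f i)).smul continuous_const)
  convert this using 2 with y
  rw [key]

private lemma memEps_comp (R : Y →L[ℝ] Y)
    (hR : FiniteDimensional ℝ (LinearMap.range (R : Y →ₗ[ℝ] Y)))
    (T : StrongDual ℝ X →L[ℝ] Y)
    (hTcont : Continuous fun φ : WeakDual ℝ X =>
      toWeakSpaceCLM ℝ Y (T (WeakDual.toStrongDual φ))) :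
    MemEps (R.comp T) := by
  have h1 : Continuous fun φ : DualBall X =>
      toWeakSpaceCLM ℝ Y (T (WeakDual.toStrongDual φ.1)) :=
    hTcont.comp continuous_subtype_val
  have h2 := (finrank_weak_to_norm_cont R hR).comp h1
  have : ∀ φ : DualBall X, evalBall (R.comp T) φ =
      R ((toWeakSpace ℝ Y).symm (toWeakSpaceCLM ℝ Y (T (WeakDual.toStrongDual φ.1)))) := by
    intro φ
    rw [toWeakSpaceCLM_eq_toWeakSpace, LinearEquiv.symm_apply_apply]
    rfl
  unfold MemEps
  convert h2 using 1
  funext φ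
  exact this φ

/-- Suppose `Y` has the bounded approximation property.  If `T : X* → Y` is
(weak*-to-weak) continuous and has separable range, then `T` is affine Baire-1: it is the
SOT-limit of a sequence of finite rank operators belonging to the ε-product `X ε Y`. -/
theorem affineBaire1_of_weakStar_to_weak_continuous_of_separable_range
    [CompleteSpace X] [CompleteSpace Y]
    (hY : HasBAP Y)
    (T : StrongDual ℝ X →L[ℝ] Y)
    (hTcont : Continuous fun φ : WeakDual ℝ X =>
      toWeakSpaceCLM ℝ Y (T (WeakDual.toStrongDual φ)))
    (hTsep : TopologicalSpace.IsSeparable (Set.range T)) :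
    ∃ Tseq : ℕ → (StrongDual ℝ X →L[ℝ] Y),
      (∀ n, FiniteDimensional ℝ
          (LinearMap.range (Tseq n : StrongDual ℝ X →ₗ[ℝ] Y)) ∧ MemEps (Tseq n)) ∧
      SOTConvergesTo Tseq T := by
  obtain ⟨lam, hlam, hbap⟩ := hY
  -- a countable dense sequence in the range of `T`
  obtain ⟨c, hc_count, hc_sub⟩ := hTsep
  have hc'_count : (insert (0 : Y) c).Countable := hc_count.insert 0
  obtain ⟨y, hy⟩ := hc'_count.exists_eq_range ⟨0, Set.mem_insert 0 c⟩
  have hrange_sub : Set.range T ⊆ closure (Set.range y) := by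
    rw [← hy]
    exact hc_sub.trans (closure_mono (Set.subset_insert _ _))
  -- choose the approximating finite rank operators
  have H : ∀ n : ℕ, ∃ R : Y →L[ℝ] Y,
      FiniteDimensional ℝ (LinearMap.range (R : Y →ₗ[ℝ] Y)) ∧ ‖R‖ ≤ lam ∧
      ∀ k ≤ n, ‖R (y k) - y k‖ ≤ 1 / (n + 1) := by
    intro n
    have hC : IsCompact (y '' {k | k ≤ n}) :=
      ((Set.finite_Iic n).image y).isCompact
    obtain ⟨R, hRfin, hRnorm, hRapp⟩ := hbap _ hC (1 / (n + 1)) (by positivity)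
    exact ⟨R, hRfin, hRnorm, fun k hk => hRapp _ ⟨k, hk, rfl⟩⟩
  choose R hRfin hRnorm hRapp using H
  refine ⟨fun n => (R n).comp T, fun n => ⟨?_, ?_⟩, ?_⟩
  · -- finite rank
    have hle : LinearMap.range (((R n).comp T : StrongDual ℝ X →L[ℝ] Y) :
        StrongDual ℝ X →ₗ[ℝ] Y) ≤ LinearMap.range ((R n : Y →L[ℝ] Y) : Y →ₗ[ℝ] Y) := by
      rintro z ⟨x', rfl⟩
      exact ⟨T x', rfl⟩
    haveI := hRfin n
    exact Submodule.finiteDimensional_of_le hle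
  · exact memEps_comp (R n) (hRfin n) T hTcont
  · -- SOT convergence
    intro x'
    rw [Metric.tendsto_atTop]
    intro ε hε
    set v := T x' with hv
    have hv_mem : v ∈ closure (Set.range y) := hrange_sub ⟨x', rfl⟩
    have hlam1 : (0:ℝ) < lam + 1 := by linarith
    obtain ⟨w, ⟨k, rfl⟩, hw⟩ := Metric.mem_closure_iff.mp hv_mem (ε / (2 * (lam + 1)))
      (by positivity)
    obtain ⟨N, hN⟩ := exists_nat_one_div_lt (ε := ε / 2) (by positivity)
    refine ⟨max k N, fun n hn => ?_⟩
    have hkn : k ≤ n := le_trans (le_max_left _ _) hn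
    have hNn : (N:ℝ) ≤ n := by exact_mod_cast le_trans (le_max_right _ _) hn
    have h1 : ‖R n v - v‖ ≤ ‖R n (v - y k)‖ + ‖R n (y k) - y k‖ + ‖y k - v‖ := by
      have : R n v - v = R n (v - y k) + (R n (y k) - y k) + (y k - v) := by
        rw [map_sub]; abel
      rw [this]
      exact (norm_add_le _ _).trans (by gcongr; exact norm_add_le _ _)
    have hd : ‖v - y k‖ < ε / (2 * (lam + 1)) := by
      rw [← dist_eq_norm]; exact hw
    have h2 : ‖R n (v - y k)‖ ≤ lam * ‖v - y k‖ := by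
      calc ‖R n (v - y k)‖ ≤ ‖R n‖ * ‖v - y k‖ := (R n).le_opNorm _
      _ ≤ lam * ‖v - y k‖ := by gcongr; exact hRnorm n
    have h3 : ‖R n (y k) - y k‖ ≤ 1 / (n + 1) := hRapp n k hkn
    have h4 : (1:ℝ) / (n + 1) ≤ 1 / (N + 1) := by
      gcongr
    have h5 : ‖y k - v‖ = ‖v - y k‖ := norm_sub_rev _ _
    have h6 : lam * ‖v - y k‖ + ‖v - y k‖ < ε / 2 := by
      have heq : (lam + 1) * (ε / (2 * (lam + 1))) = ε / 2 := by
        field_simp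
      have h := mul_lt_mul_of_pos_left hd hlam1
      rw [heq] at h
      have hring : lam * ‖v - y k‖ + ‖v - y k‖ = (lam + 1) * ‖v - y k‖ := by ring
      linarith
    rw [Real.dist_eq, sub_zero, abs_of_nonneg (norm_nonneg _)]
    have : ‖R n v - v‖ < ε := by
      have := h1
      have h7 : (1:ℝ)/(N+1) < ε / 2 := hN
      nlinarith [norm_nonneg (v - y k)]
    simpa using this
end
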